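/- arXiv:2312.00904 — 3 statements merged into one kernel-verified Lean document; each statement's English description precedes it below -/
import Mathlib

section
/- Let ξ be a Young measure from ([0,1], ν) to E_X = [x̲, x̄] with x̲, x̄ ∈ ℤ. Define for each n the discretised Young measure ξⁿ by: on each dyadic cell Dₖⁿ = [k2⁻ⁿ, (k+1)2⁻ⁿ) with ν(Dₖⁿ) > 0, ξⁿ(v, ·) is the discrete measure placing mass ν⊗ξ(Dₖⁿ × D_lⁿ)/ν(Dₖⁿ) on the grid point l·2⁻ⁿ for each l, and ξⁿ(v, ·) = δ₀ on null cells. Then ξⁿ → ξ narrowly as n → ∞. -/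
open MeasureTheory ProbabilityTheory Filter

/-- The dyadic cell `[k/2ⁿ, (k+1)/2ⁿ)`. -/
noncomputable def dyadicCell (n : ℕ) (k : ℤ) : Set ℝ :=
  Set.Ico ((k : ℝ) / 2 ^ n) ((k + 1 : ℤ) / 2 ^ n)

namespace DYMAux

private lemma two_pow_pos (n : ℕ) : (0:ℝ) < 2 ^ n := by positivity

private lemma mem_dyadicCell_iff {n : ℕ} {k : ℤ} {v : ℝ} :
    v ∈ dyadicCell n k ↔ ⌊(2:ℝ)^n * v⌋ = k := by
  rw [dyadicCell, Set.mem_Ico, Int.floor_eq_iff,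
    div_le_iff₀ (two_pow_pos n), lt_div_iff₀ (two_pow_pos n)]
  push_cast
  constructor
  · rintro ⟨h1, h2⟩; exact ⟨by nlinarith, by nlinarith⟩
  · rintro ⟨h1, h2⟩; exact ⟨by nlinarith, by nlinarith⟩

private lemma self_mem_cell (n : ℕ) (v : ℝ) : v ∈ dyadicCell n ⌊(2:ℝ)^n * v⌋ :=
  mem_dyadicCell_iff.2 rfl

private lemma measurableSet_dyadicCell (n : ℕ) (k : ℤ) : MeasurableSet (dyadicCell n k) :=
  measurableSet_Ico

private lemma dyadicCell_disjoint {n : ℕ} {k k' : ℤ} (h : k ≠ k') :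
    Disjoint (dyadicCell n k) (dyadicCell n k') := by
  rw [Set.disjoint_left]
  intro v hv hv'
  exact h ((mem_dyadicCell_iff.1 hv).symm.trans (mem_dyadicCell_iff.1 hv'))

private lemma biUnion_dyadicCell (n : ℕ) (lo hi : ℤ) :
    (⋃ l ∈ Finset.Ico lo hi, dyadicCell n l) = Set.Ico ((lo:ℝ)/2^n) ((hi:ℝ)/2^n) := by
  ext x
  simp only [Set.mem_iUnion, Finset.mem_Ico, exists_prop, Set.mem_Ico]
  constructor
  · rintro ⟨l, ⟨h1, h2⟩, hx⟩
    rw [dyadicCell, Set.mem_Ico] at hx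
    push_cast at hx
    obtain ⟨hx1, hx2⟩ := hx
    constructor
    · refine le_trans ?_ hx1
      have h1' : (lo:ℝ) ≤ (l:ℝ) := by exact_mod_cast h1
      gcongr
    · refine lt_of_lt_of_le hx2 ?_
      have h2' : (l:ℝ) + 1 ≤ (hi:ℝ) := by exact_mod_cast h2
      gcongr
  · rintro ⟨h1, h2⟩
    refine ⟨⌊(2:ℝ)^n * x⌋, ⟨?_, ?_⟩, self_mem_cell n x⟩
    · rw [Int.le_floor]
      rw [div_le_iff₀ (two_pow_pos n)] at h1
      nlinarith
    · rw [Int.floor_lt]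
      rw [lt_div_iff₀ (two_pow_pos n)] at h2
      nlinarith

private lemma abs_sub_lt_of_mem {n : ℕ} {k : ℤ} {u v : ℝ}
    (hu : u ∈ dyadicCell n k) (hv : v ∈ dyadicCell n k) : |u - v| < 1/2^n := by
  rw [dyadicCell, Set.mem_Ico] at hu hv
  push_cast at hu hv
  have h : ((k:ℝ)+1)/2^n = (k:ℝ)/2^n + 1/2^n := by ring
  rw [abs_sub_lt_iff]
  constructor <;> nlinarith [hu.1, hu.2, hv.1, hv.2]

private lemma integrable_of_bounded' {μ : Measure ℝ} [IsFiniteMeasure μ] {h : ℝ → ℝ} {C : ℝ}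
    (hm : AEStronglyMeasurable h μ) (hb : ∀ x, |h x| ≤ C) : Integrable h μ :=
  ⟨hm, HasFiniteIntegral.of_bounded (Eventually.of_forall hb)⟩

private lemma abs_integral_le {μ : Measure ℝ} [IsProbabilityMeasure μ] {h : ℝ → ℝ} {C : ℝ}
    (hb : ∀ x, |h x| ≤ C) : |∫ x, h x ∂μ| ≤ C := by
  have := norm_integral_le_of_norm_le_const (μ := μ) (f := h) (C := C) (Eventually.of_forall hb)
  simpa using this

/-- The dyadic averaging operator. -/
private noncomputable def dyAvg (ν : Measure ℝ) (h : ℝ → ℝ) (n : ℕ) (v : ℝ) : ℝ :=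
  (∫ u in dyadicCell n ⌊(2:ℝ)^n * v⌋, h u ∂ν) / (ν (dyadicCell n ⌊(2:ℝ)^n * v⌋)).toReal

private lemma dyAvg_measurable (ν : Measure ℝ) (h : ℝ → ℝ) (n : ℕ) :
    Measurable (dyAvg ν h n) := by
  have h1 : Measurable fun v : ℝ => ⌊(2:ℝ)^n * v⌋ := (measurable_const.mul measurable_id).floor
  exact Measurable.comp
    (measurable_from_top
      (f := fun k : ℤ => (∫ u in dyadicCell n k, h u ∂ν) / (ν (dyadicCell n k)).toReal)) h1

private lemma dyAvg_eq_on_cell {ν : Measure ℝ} {h : ℝ → ℝ} {n : ℕ} {k : ℤ} {v : ℝ}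
    (hv : v ∈ dyadicCell n k) :
    dyAvg ν h n v = (∫ u in dyadicCell n k, h u ∂ν) / (ν (dyadicCell n k)).toReal := by
  rw [dyAvg, mem_dyadicCell_iff.1 hv]

private lemma dyAvg_abs_le (ν : Measure ℝ) [IsFiniteMeasure ν] {h : ℝ → ℝ} {C : ℝ}
    (hm : AEStronglyMeasurable h ν) (hb : ∀ x, |h x| ≤ C) (n : ℕ) (v : ℝ) :
    |dyAvg ν h n v| ≤ C := by
  have hC0 : 0 ≤ C := (abs_nonneg _).trans (hb 0)
  rw [dyAvg, abs_div, abs_of_nonneg ENNReal.toReal_nonneg]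
  rcases eq_or_lt_of_le (ENNReal.toReal_nonneg (a := ν (dyadicCell n ⌊(2:ℝ)^n*v⌋))) with h0 | h0
  · rw [← h0, div_zero]; exact hC0
  · rw [div_le_iff₀ h0]
    have := norm_setIntegral_le_of_norm_le_const (μ := ν) (f := h)
      (s := dyadicCell n ⌊(2:ℝ)^n*v⌋) (C := C) (measure_lt_top _ _)
      (fun x _ => hb x)
    simpa [Real.norm_eq_abs, measureReal_def] using this

private lemma dyAvg_sub (ν : Measure ℝ) [IsFiniteMeasure ν] {h₁ h₂ : ℝ → ℝ} {C₁ C₂ : ℝ}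
    (hm₁ : AEStronglyMeasurable h₁ ν) (hb₁ : ∀ x, |h₁ x| ≤ C₁)
    (hm₂ : AEStronglyMeasurable h₂ ν) (hb₂ : ∀ x, |h₂ x| ≤ C₂) (n : ℕ) (v : ℝ) :
    dyAvg ν (fun x => h₁ x - h₂ x) n v = dyAvg ν h₁ n v - dyAvg ν h₂ n v := by
  rw [dyAvg, dyAvg, dyAvg, ← sub_div]
  congr 1
  exact integral_sub ((integrable_of_bounded' hm₁ hb₁).restrict)
    ((integrable_of_bounded' hm₂ hb₂).restrict)


private lemma cells_pos_ae (ν : Measure ℝ) [IsProbabilityMeasure ν]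
    (hνIc : ν (Set.Ico (0:ℝ) 1)ᶜ = 0) :
    ∀ᵐ v ∂ν, ∀ n : ℕ, ν (dyadicCell n ⌊(2:ℝ)^n * v⌋) ≠ 0 := by
  rw [ae_all_iff]
  intro n
  rw [ae_iff]
  have hsub : {v : ℝ | ¬ ν (dyadicCell n ⌊(2:ℝ)^n * v⌋) ≠ 0} ⊆ (Set.Ico (0:ℝ) 1)ᶜ ∪
      ⋃ k ∈ (Finset.Ico (0:ℤ) (2^n)).filter (fun k => ν (dyadicCell n k) = 0), dyadicCell n k := by
    intro v hv
    simp only [Set.mem_setOf_eq, not_not] at hv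
    by_cases hvI : v ∈ Set.Ico (0:ℝ) 1
    · right
      refine Set.mem_iUnion₂.2 ⟨⌊(2:ℝ)^n*v⌋, ?_, self_mem_cell n v⟩
      rw [Finset.mem_filter, Finset.mem_Ico]
      refine ⟨⟨?_, ?_⟩, hv⟩
      · rw [Int.le_floor]
        push_cast
        exact mul_nonneg (two_pow_pos n).le hvI.1
      · rw [Int.floor_lt]
        push_cast
        nlinarith [hvI.2, two_pow_pos n]
    · left; exact hvI
  refine measure_mono_null hsub ?_
  · apply measure_union_null hνIc
    refine le_antisymm ?_ (by positivity)
    refine (measure_biUnion_finset_le _ _).trans ?_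
    refine le_of_eq (Finset.sum_eq_zero ?_)
    intro k hk
    exact (Finset.mem_filter.1 hk).2

private lemma dyAvg_tendsto_ae (ν : Measure ℝ) [IsProbabilityMeasure ν]
    (hνIc : ν (Set.Ico (0:ℝ) 1)ᶜ = 0) {h : ℝ → ℝ} {C : ℝ}
    (hc : Continuous h) (hb : ∀ x, |h x| ≤ C) :
    ∀ᵐ v ∂ν, Filter.Tendsto (fun n => dyAvg ν h n v) atTop (nhds (h v)) := by
  filter_upwards [cells_pos_ae ν hνIc] with v hv
  rw [Metric.tendsto_atTop]
  intro ε hε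
  obtain ⟨δ, hδ, hδ'⟩ := Metric.continuousAt_iff.1 hc.continuousAt (ε/2) (by linarith)
  obtain ⟨N, hN⟩ : ∃ N : ℕ, (1:ℝ)/2^N < δ := by
    obtain ⟨N, hN⟩ := pow_unbounded_of_one_lt (1/δ) (one_lt_two (α := ℝ))
    refine ⟨N, ?_⟩
    rw [div_lt_iff₀ (two_pow_pos N)]
    rw [div_lt_iff₀ hδ] at hN
    nlinarith
  refine ⟨N, fun n hn => ?_⟩
  have hνD := hv n
  set D := dyadicCell n ⌊(2:ℝ)^n * v⌋ with hD
  have hpos : 0 < (ν D).toReal := ENNReal.toReal_pos hνD (measure_ne_top _ _)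
  have hmemv : v ∈ D := self_mem_cell n v
  have hsmall : ∀ u ∈ D, |h u - h v| ≤ ε/2 := by
    intro u hu
    have h1 : |u - v| < 1/2^n := abs_sub_lt_of_mem hu hmemv
    have h2 : (1:ℝ)/2^n ≤ 1/2^N := by
      have : (2:ℝ)^N ≤ 2^n := pow_le_pow_right₀ one_le_two hn
      exact one_div_le_one_div_of_le (two_pow_pos N) this
    have hd : dist u v < δ := by rw [Real.dist_eq]; linarith
    exact le_of_lt (hδ' hd)
  have hint : IntegrableOn h D ν :=
    (integrable_of_bounded' hc.aestronglyMeasurable hb).restrict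
  have heq : dyAvg ν h n v - h v = (∫ u in D, (h u - h v) ∂ν) / (ν D).toReal := by
    rw [dyAvg_eq_on_cell hmemv, integral_sub hint (integrableOn_const (measure_ne_top _ _)),
      setIntegral_const, smul_eq_mul, measureReal_def]
    rw [← hD]
    field_simp
  have hbnd : |∫ u in D, (h u - h v) ∂ν| ≤ ε/2 * (ν D).toReal := by
    have := norm_setIntegral_le_of_norm_le_const (μ := ν) (s := D) (C := ε/2)
      (f := fun u => h u - h v)
      (measure_lt_top _ _) (fun u hu => by simpa [Real.norm_eq_abs] using hsmall u hu)
    simpa [Real.norm_eq_abs, measureReal_def] using this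
  rw [Real.dist_eq, heq, abs_div, abs_of_nonneg ENNReal.toReal_nonneg]
  calc |∫ u in D, (h u - h v) ∂ν| / (ν D).toReal
      ≤ (ε/2 * (ν D).toReal) / (ν D).toReal := by gcongr
    _ = ε/2 := mul_div_cancel_right₀ _ hpos.ne'
    _ < ε := by linarith

private lemma dyAvg_L1_tendsto_cont (ν : Measure ℝ) [IsProbabilityMeasure ν]
    (hνIc : ν (Set.Ico (0:ℝ) 1)ᶜ = 0) {h : ℝ → ℝ} {C : ℝ}
    (hc : Continuous h) (hb : ∀ x, |h x| ≤ C) :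
    Filter.Tendsto (fun n => ∫ v in Set.Ico (0:ℝ) 1, |dyAvg ν h n v - h v| ∂ν) atTop (nhds 0) := by
  have key := tendsto_integral_of_dominated_convergence
    (μ := ν.restrict (Set.Ico (0:ℝ) 1)) (F := fun n v => |dyAvg ν h n v - h v|)
    (f := fun _ => (0:ℝ)) (bound := fun _ => C + C) ?_ ?_ ?_ ?_
  · simpa using key
  · intro n
    exact (((dyAvg_measurable ν h n).sub hc.measurable).abs).aestronglyMeasurable.restrict
  · exact integrable_const _
  · intro n
    refine Eventually.of_forall fun v => ?_
    rw [Real.norm_eq_abs, abs_abs]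
    calc |dyAvg ν h n v - h v| ≤ |dyAvg ν h n v| + |h v| := by
          simpa [sub_eq_add_neg, abs_neg] using abs_add_le (dyAvg ν h n v) (-(h v))
      _ ≤ C + C := add_le_add (dyAvg_abs_le ν hc.aestronglyMeasurable hb n v) (hb v)
  · filter_upwards [ae_restrict_of_ae (dyAvg_tendsto_ae ν hνIc hc hb)] with v hv
    have : Tendsto (fun n => |dyAvg ν h n v - h v|) atTop (nhds |h v - h v|) :=
      (hv.sub (tendsto_const_nhds (x := h v))).abs
    simpa using this

private lemma dyAvg_contraction (ν : Measure ℝ) [IsProbabilityMeasure ν] {h : ℝ → ℝ} {C : ℝ}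
    (hm : Measurable h) (hb : ∀ x, |h x| ≤ C) (n : ℕ) :
    ∫ v in Set.Ico (0:ℝ) 1, |dyAvg ν h n v| ∂ν ≤ ∫ v in Set.Ico (0:ℝ) 1, |h v| ∂ν := by
  have hC0 : 0 ≤ C := (abs_nonneg _).trans (hb 0)
  have hunion : (⋃ k ∈ Finset.Ico (0:ℤ) (2^n), dyadicCell n k) = Set.Ico (0:ℝ) 1 := by
    rw [biUnion_dyadicCell]
    have h1 : ((0:ℤ):ℝ)/2^n = 0 := by norm_num
    have h2 : (((2^n : ℤ)):ℝ)/2^n = 1 := by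
      push_cast
      exact div_self (two_pow_pos n).ne'
    rw [h1, h2]
  have hdisj : (↑(Finset.Ico (0:ℤ) (2^n)) : Set ℤ).Pairwise (Function.onFun Disjoint fun k => dyadicCell n k) :=
    fun k _ k' _ hkk' => dyadicCell_disjoint hkk'
  have habs : ∀ x, |(|h x|)| ≤ C := fun x => by rw [abs_abs]; exact hb x
  have habs' : ∀ x, |(|dyAvg ν h n x|)| ≤ C := fun x => by
    rw [abs_abs]; exact dyAvg_abs_le ν hm.aestronglyMeasurable hb n x
  rw [← hunion,
    integral_biUnion_finset _ (fun k _ => measurableSet_dyadicCell n k) hdisj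
      (fun k _ => (integrable_of_bounded'
        ((dyAvg_measurable ν h n).abs.aestronglyMeasurable) habs').restrict),
    integral_biUnion_finset _ (fun k _ => measurableSet_dyadicCell n k) hdisj
      (fun k _ => (integrable_of_bounded' (hm.abs.aestronglyMeasurable) habs).restrict)]
  apply Finset.sum_le_sum
  intro k _
  by_cases hνk : ν (dyadicCell n k) = 0
  · rw [Measure.restrict_eq_zero.2 hνk]
    simp
  · have hconst : ∀ v ∈ dyadicCell n k,
        |dyAvg ν h n v| = |(∫ u in dyadicCell n k, h u ∂ν) / (ν (dyadicCell n k)).toReal| :=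
      fun v hv => by rw [dyAvg_eq_on_cell hv]
    rw [setIntegral_congr_fun (measurableSet_dyadicCell n k) hconst, setIntegral_const,
      smul_eq_mul, measureReal_def, abs_div, abs_of_nonneg ENNReal.toReal_nonneg, mul_comm,
      div_mul_cancel₀ _ (ENNReal.toReal_pos hνk (measure_ne_top _ _)).ne']
    simpa [Real.norm_eq_abs] using norm_integral_le_integral_norm (μ := ν.restrict (dyadicCell n k)) h


private lemma indicator_abs_le (A : Set ℝ) : ∀ x, |A.indicator (1:ℝ→ℝ) x| ≤ 1 := by
  intro x
  by_cases hx : x ∈ A <;> simp [Set.indicator_apply, hx]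

private lemma dyAvg_L1_tendsto_indicator (ν : Measure ℝ) [IsProbabilityMeasure ν]
    (hνIc : ν (Set.Ico (0:ℝ) 1)ᶜ = 0) {A : Set ℝ} (hA : MeasurableSet A) :
    Filter.Tendsto
      (fun n => ∫ v in Set.Ico (0:ℝ) 1, |dyAvg ν (A.indicator 1) n v - A.indicator 1 v| ∂ν)
      atTop (nhds 0) := by
  have hmA : Measurable (A.indicator (1:ℝ→ℝ)) := measurable_one.indicator hA
  have hbA := indicator_abs_le A
  refine tendsto_order.2 ⟨fun a ha => ?_, fun a ha => ?_⟩
  · exact Eventually.of_forall fun n =>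
      lt_of_lt_of_le ha (integral_nonneg fun v => abs_nonneg _)
  · -- a > 0 : show eventually the L¹ norm is < a
    have ha6 : (0:ℝ) < a/6 := by linarith
    have he : (ENNReal.ofReal (a/6)) ≠ 0 := (ENNReal.ofReal_pos.2 ha6).ne'
    obtain ⟨K, hKA, hK, hAK⟩ :=
      hA.exists_isCompact_diff_lt (measure_ne_top ν A) he
    obtain ⟨U, hUA, hUo, -, hUAm⟩ :=
      hA.exists_isOpen_diff_lt (measure_ne_top ν A) he
    obtain ⟨φ, hφK, hφU, -, hφ01⟩ :=
      exists_continuous_one_zero_of_isCompact hK (hUo.isClosed_compl)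
        (Set.disjoint_left.2 fun x hxK hxU => hxU (hUA (hKA hxK)))
    have hφc : Continuous (⇑φ) := φ.continuous
    have hbφ : ∀ x, |φ x| ≤ 1 := fun x =>
      abs_le.2 ⟨by linarith [(hφ01 x).1], (hφ01 x).2⟩
    have hbdiff : ∀ x, |A.indicator (1:ℝ→ℝ) x - φ x| ≤ 2 := fun x => by
      have h1 := hbA x
      have h2 := hbφ x
      rw [abs_le] at h1 h2 ⊢
      constructor <;> linarith [h1.1, h1.2, h2.1, h2.2]
    -- pointwise bound by the indicator of U \ K
    have hptw : ∀ v, |A.indicator (1:ℝ→ℝ) v - φ v| ≤ (U \ K).indicator (1:ℝ→ℝ) v := by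
      intro v
      have h2 := hφ01 v
      simp only [Set.mem_Icc] at h2
      by_cases hvU : v ∈ U
      · by_cases hvK : v ∈ K
        · have h1 : A.indicator (1:ℝ→ℝ) v = 1 := by
            simp [Set.indicator_of_mem (hKA hvK)]
          have hφv : φ v = 1 := hφK hvK
          have hz : |A.indicator (1:ℝ→ℝ) v - φ v| = 0 := by rw [h1, hφv]; simp
          rw [hz]
          exact Set.indicator_nonneg (fun _ _ => by norm_num) v
        · have hmem : v ∈ U \ K := ⟨hvU, hvK⟩
          have hval : (U \ K).indicator (1:ℝ→ℝ) v = 1 := by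
            simp [Set.indicator_of_mem hmem]
          rw [hval, abs_le]
          by_cases hvA : v ∈ A
          · have h1 : A.indicator (1:ℝ→ℝ) v = 1 := by simp [Set.indicator_of_mem hvA]
            rw [h1]
            constructor <;> linarith [h2.1, h2.2]
          · have h1 : A.indicator (1:ℝ→ℝ) v = 0 := by simp [Set.indicator_of_notMem hvA]
            rw [h1]
            constructor <;> linarith [h2.1, h2.2]
      · have h1 : A.indicator (1:ℝ→ℝ) v = 0 := by
          simp [Set.indicator_of_notMem (fun hvA => hvU (hUA hvA))]
        have hφv : φ v = 0 := hφU hvU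
        have hz : |A.indicator (1:ℝ→ℝ) v - φ v| = 0 := by rw [h1, hφv]; simp
        rw [hz]
        exact Set.indicator_nonneg (fun _ _ => by norm_num) v
    have hUKm : MeasurableSet (U \ K) := hUo.measurableSet.diff hK.measurableSet
    -- L¹ distance between the indicator and φ
    have hL1 : ∀ s : Set ℝ, ∫ v in s, |A.indicator (1:ℝ→ℝ) v - φ v| ∂ν ≤ a/3 := by
      intro s
      have hint1 : IntegrableOn (fun v => |A.indicator (1:ℝ→ℝ) v - φ v|) s ν := by
        refine (integrable_of_bounded' (C := 2) ?_ ?_).restrict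
        · exact ((hmA.sub hφc.measurable).abs).aestronglyMeasurable
        · intro x; rw [abs_abs]; exact hbdiff x
      have hint2 : IntegrableOn ((U \ K).indicator (1:ℝ→ℝ)) s ν :=
        (integrable_of_bounded' (C := 1)
          ((measurable_one.indicator hUKm).aestronglyMeasurable) (indicator_abs_le _)).restrict
      calc ∫ v in s, |A.indicator (1:ℝ→ℝ) v - φ v| ∂ν
          ≤ ∫ v in s, (U \ K).indicator (1:ℝ→ℝ) v ∂ν := integral_mono hint1 hint2 hptw
        _ = ∫ v in s ∩ (U \ K), (1:ℝ) ∂ν := setIntegral_indicator hUKm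
        _ = (ν (s ∩ (U \ K))).toReal • 1 := setIntegral_const 1
        _ ≤ (ν (U \ K)).toReal := by
            rw [smul_eq_mul, mul_one]
            exact ENNReal.toReal_mono (measure_ne_top _ _)
              (measure_mono Set.inter_subset_right)
        _ ≤ a/3 := by
            have hsub : U \ K ⊆ (U \ A) ∪ (A \ K) := by
              intro x hx
              by_cases hxA : x ∈ A
              · exact Or.inr ⟨hxA, hx.2⟩
              · exact Or.inl ⟨hx.1, hxA⟩
            have hle : ν (U \ K) ≤ ENNReal.ofReal (a/6) + ENNReal.ofReal (a/6) :=
              (measure_mono hsub).trans ((measure_union_le _ _).trans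
                (add_le_add hUAm.le hAK.le))
            have := ENNReal.toReal_mono (by finiteness) hle
            rw [ENNReal.toReal_add ENNReal.ofReal_ne_top ENNReal.ofReal_ne_top,
              ENNReal.toReal_ofReal ha6.le] at this
            linarith
    -- middle term eventually small
    have hmid := dyAvg_L1_tendsto_cont ν hνIc hφc hbφ
    filter_upwards [hmid.eventually_lt_const ha6] with n hn
    -- triangle inequality
    have hint_avgdiff : IntegrableOn
        (fun v => |dyAvg ν (fun x => A.indicator 1 x - φ x) n v|) (Set.Ico (0:ℝ) 1) ν := by
      refine (integrable_of_bounded' (C := 2) ?_ ?_).restrict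
      · exact ((dyAvg_measurable ν _ n).abs).aestronglyMeasurable
      · intro x
        rw [abs_abs]
        exact dyAvg_abs_le ν ((hmA.sub hφc.measurable).aestronglyMeasurable) hbdiff n x
    have hint_mid : IntegrableOn (fun v => |dyAvg ν (⇑φ) n v - φ v|) (Set.Ico (0:ℝ) 1) ν := by
      refine (integrable_of_bounded' (C := 2) ?_ ?_).restrict
      · exact (((dyAvg_measurable ν _ n).sub hφc.measurable).abs).aestronglyMeasurable
      · intro x
        rw [abs_abs]
        calc |dyAvg ν (⇑φ) n x - φ x| ≤ |dyAvg ν (⇑φ) n x| + |φ x| := by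
              simpa [sub_eq_add_neg, abs_neg] using abs_add_le (dyAvg ν (⇑φ) n x) (-(φ x))
          _ ≤ 1 + 1 := add_le_add (dyAvg_abs_le ν hφc.aestronglyMeasurable hbφ n x) (hbφ x)
          _ = 2 := by norm_num
    have hint_right : IntegrableOn (fun v => |φ v - A.indicator 1 v|) (Set.Ico (0:ℝ) 1) ν := by
      refine (integrable_of_bounded' (C := 2) ?_ ?_).restrict
      · exact ((hφc.measurable.sub hmA).abs).aestronglyMeasurable
      · intro x
        rw [abs_abs, abs_sub_comm]
        exact hbdiff x
    have hint12 : IntegrableOn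
        (fun v => |dyAvg ν (fun x => A.indicator 1 x - φ x) n v| + |dyAvg ν (⇑φ) n v - φ v|)
        (Set.Ico (0:ℝ) 1) ν := hint_avgdiff.add hint_mid
    have hint123 : IntegrableOn
        (fun v => |dyAvg ν (fun x => A.indicator 1 x - φ x) n v| + |dyAvg ν (⇑φ) n v - φ v|
          + |φ v - A.indicator 1 v|) (Set.Ico (0:ℝ) 1) ν := hint12.add hint_right
    have hintLHS : IntegrableOn
        (fun v => |dyAvg ν (A.indicator 1) n v - A.indicator 1 v|) (Set.Ico (0:ℝ) 1) ν := by
      refine (integrable_of_bounded' (C := 2) ?_ ?_).restrict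
      · exact (((dyAvg_measurable ν _ n).sub hmA).abs).aestronglyMeasurable
      · intro x
        rw [abs_abs]
        calc |dyAvg ν (A.indicator 1) n x - A.indicator 1 x|
            ≤ |dyAvg ν (A.indicator 1) n x| + |A.indicator (1:ℝ→ℝ) x| := by
              simpa [sub_eq_add_neg, abs_neg] using
                abs_add_le (dyAvg ν (A.indicator 1) n x) (-(A.indicator (1:ℝ→ℝ) x))
          _ ≤ 1 + 1 := add_le_add
              (dyAvg_abs_le ν hmA.aestronglyMeasurable hbA n x) (hbA x)
          _ = 2 := by norm_num
    have htriangle : ∫ v in Set.Ico (0:ℝ) 1, |dyAvg ν (A.indicator 1) n v - A.indicator 1 v| ∂ν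
        ≤ (∫ v in Set.Ico (0:ℝ) 1, |dyAvg ν (fun x => A.indicator 1 x - φ x) n v| ∂ν)
          + (∫ v in Set.Ico (0:ℝ) 1, |dyAvg ν (⇑φ) n v - φ v| ∂ν)
          + (∫ v in Set.Ico (0:ℝ) 1, |φ v - A.indicator 1 v| ∂ν) := by
      have hptw2 : ∀ v, |dyAvg ν (A.indicator 1) n v - A.indicator 1 v|
          ≤ |dyAvg ν (fun x => A.indicator 1 x - φ x) n v| + |dyAvg ν (⇑φ) n v - φ v|
            + |φ v - A.indicator 1 v| := by
        intro v
        have hlin : dyAvg ν (fun x => A.indicator 1 x - φ x) n v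
            = dyAvg ν (A.indicator 1) n v - dyAvg ν (⇑φ) n v :=
          dyAvg_sub ν hmA.aestronglyMeasurable hbA hφc.aestronglyMeasurable hbφ n v
        calc |dyAvg ν (A.indicator 1) n v - A.indicator 1 v|
            ≤ |dyAvg ν (A.indicator 1) n v - dyAvg ν (⇑φ) n v|
              + |dyAvg ν (⇑φ) n v - A.indicator 1 v| := abs_sub_le _ _ _
          _ ≤ |dyAvg ν (A.indicator 1) n v - dyAvg ν (⇑φ) n v|
              + (|dyAvg ν (⇑φ) n v - φ v| + |φ v - A.indicator 1 v|) :=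
              add_le_add le_rfl (abs_sub_le _ _ _)
          _ = |dyAvg ν (fun x => A.indicator 1 x - φ x) n v|
              + |dyAvg ν (⇑φ) n v - φ v| + |φ v - A.indicator 1 v| := by
              rw [hlin]; ring
      calc ∫ v in Set.Ico (0:ℝ) 1, |dyAvg ν (A.indicator 1) n v - A.indicator 1 v| ∂ν
          ≤ ∫ v in Set.Ico (0:ℝ) 1,
              (|dyAvg ν (fun x => A.indicator 1 x - φ x) n v| + |dyAvg ν (⇑φ) n v - φ v|
                + |φ v - A.indicator 1 v|) ∂ν := integral_mono hintLHS hint123 hptw2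
        _ = _ := by rw [integral_add hint12 hint_right, integral_add hint_avgdiff hint_mid]
    have hcontr : ∫ v in Set.Ico (0:ℝ) 1, |dyAvg ν (fun x => A.indicator 1 x - φ x) n v| ∂ν
        ≤ ∫ v in Set.Ico (0:ℝ) 1, |A.indicator (1:ℝ→ℝ) v - φ v| ∂ν :=
      dyAvg_contraction ν (hmA.sub hφc.measurable) hbdiff n
    have h1 := hL1 (Set.Ico (0:ℝ) 1)
    have h3 : ∫ v in Set.Ico (0:ℝ) 1, |φ v - A.indicator 1 v| ∂ν ≤ a/3 := by
      have : ∀ v, |φ v - A.indicator (1:ℝ→ℝ) v| = |A.indicator (1:ℝ→ℝ) v - φ v| :=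
        fun v => abs_sub_comm _ _
      simp_rw [this]
      exact hL1 _
    linarith [htriangle, hcontr, h1, h3, hn]

end DYMAux

open DYMAux

/-- The piecewise-constant dyadic discretisation of a Young measure converges
narrowly to the original Young measure. -/
theorem discretised_young_measure_narrow_convergence
    (xlo xhi : ℤ) (hx : xlo < xhi)
    (ν : Measure ℝ) [IsProbabilityMeasure ν]
    (hν : ν (Set.Icc (0 : ℝ) 1)ᶜ = 0) (hν1 : ν {(1 : ℝ)} = 0)
    (κ : Kernel ℝ ℝ) [IsMarkovKernel κ]
    (hsupp : ∀ v, (κ v) (Set.Icc (xlo : ℝ) (xhi : ℝ))ᶜ = 0)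
    (htop : ∀ v, (κ v) {(xhi : ℝ)} = 0)
    (κn : ℕ → Kernel ℝ ℝ) [∀ n, IsMarkovKernel (κn n)]
    (hdisc : ∀ (n : ℕ) (v : ℝ), v ∈ Set.Ico (0 : ℝ) 1 →
      (ν (dyadicCell n ⌊(2 : ℝ) ^ n * v⌋) ≠ 0 →
        κn n v = ∑ l ∈ Finset.Ico (xlo * 2 ^ n) (xhi * 2 ^ n),
          (((ν ⊗ₘ κ) ((dyadicCell n ⌊(2 : ℝ) ^ n * v⌋) ×ˢ (dyadicCell n l))) /
            ν (dyadicCell n ⌊(2 : ℝ) ^ n * v⌋)) • Measure.dirac ((l : ℝ) / 2 ^ n)) ∧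
      (ν (dyadicCell n ⌊(2 : ℝ) ^ n * v⌋) = 0 → κn n v = Measure.dirac 0)) :
    ∀ A : Set ℝ, MeasurableSet A → ∀ f : ℝ → ℝ, Continuous f →
      (∃ M, ∀ x, |f x| ≤ M) →
      Tendsto (fun n => ∫ v in A, ∫ x, f x ∂(κn n v) ∂ν) atTop
        (nhds (∫ v in A, ∫ x, f x ∂(κ v) ∂ν)) := by
  intro A hA f hf hbd
  obtain ⟨M₀, hM₀⟩ := hbd
  set M : ℝ := max M₀ 1 with hMdef
  have hM1 : (1:ℝ) ≤ M := le_max_right _ _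
  have hMpos : (0:ℝ) < M := lt_of_lt_of_le one_pos hM1
  have hM : ∀ x, |f x| ≤ M := fun x => (hM₀ x).trans (le_max_left _ _)
  -- ν is concentrated on [0,1)
  have hνIc : ν (Set.Ico (0:ℝ) 1)ᶜ = 0 := by
    refine measure_mono_null (fun x hx' => ?_) (measure_union_null hν hν1)
    simp only [Set.mem_compl_iff, Set.mem_Ico, not_and_or, not_le, not_lt] at hx'
    simp only [Set.mem_union, Set.mem_compl_iff, Set.mem_Icc, Set.mem_singleton_iff,
      not_and_or, not_le, not_lt]
    rcases hx' with h | h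
    · exact Or.inl (Or.inl h)
    · rcases eq_or_lt_of_le h with h' | h'
      · exact Or.inr h'.symm
      · exact Or.inl (Or.inr h')
  -- each κ v is concentrated on [xlo, xhi)
  have hκX : ∀ v, κ v (Set.Ico (xlo:ℝ) (xhi:ℝ))ᶜ = 0 := by
    intro v
    refine measure_mono_null (fun x hx' => ?_) (measure_union_null (hsupp v) (htop v))
    simp only [Set.mem_compl_iff, Set.mem_Ico, not_and_or, not_le, not_lt] at hx'
    simp only [Set.mem_union, Set.mem_compl_iff, Set.mem_Icc, Set.mem_singleton_iff,
      not_and_or, not_le, not_lt]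
    rcases hx' with h | h
    · exact Or.inl (Or.inl h)
    · rcases eq_or_lt_of_le h with h' | h'
      · exact Or.inr h'.symm
      · exact Or.inl (Or.inr h')
  -- dyadic partitions
  have hIunion : ∀ n : ℕ, (⋃ k ∈ Finset.Ico (0:ℤ) (2^n), dyadicCell n k) = Set.Ico (0:ℝ) 1 := by
    intro n
    rw [biUnion_dyadicCell]
    have h1 : ((0:ℤ):ℝ)/2^n = 0 := by norm_num
    have h2 : (((2^n : ℤ)):ℝ)/2^n = 1 := by
      push_cast
      exact div_self (two_pow_pos n).ne'
    rw [h1, h2]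
  have hXunion : ∀ n : ℕ,
      (⋃ l ∈ Finset.Ico (xlo * 2^n) (xhi * 2^n), dyadicCell n l) = Set.Ico (xlo:ℝ) (xhi:ℝ) := by
    intro n
    rw [biUnion_dyadicCell]
    have h1 : ((xlo * 2^n : ℤ):ℝ)/2^n = (xlo:ℝ) := by
      push_cast
      field_simp
    have h2 : ((xhi * 2^n : ℤ):ℝ)/2^n = (xhi:ℝ) := by
      push_cast
      field_simp
    rw [h1, h2]
  -- the dyadic rounding maps
  have hsn_meas : ∀ n : ℕ, Measurable (fun x : ℝ => ((⌊(2:ℝ)^n * x⌋ : ℤ) : ℝ)/2^n) := fun n =>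
    Measurable.comp (measurable_from_top (f := fun k : ℤ => ((k:ℝ))/2^n))
      ((measurable_const.mul measurable_id).floor)
  have hsn_tendsto : ∀ x : ℝ,
      Tendsto (fun n : ℕ => ((⌊(2:ℝ)^n * x⌋ : ℤ) : ℝ)/2^n) atTop (nhds x) := by
    intro x
    rw [← tendsto_sub_nhds_zero_iff]
    have hgtend : Tendsto (fun n : ℕ => (1:ℝ)/2^n) atTop (nhds 0) := by
      have h := tendsto_pow_atTop_nhds_zero_of_lt_one
        (by norm_num : (0:ℝ) ≤ 1/2) (by norm_num : (1/2:ℝ) < 1)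
      simpa [div_pow] using h
    refine squeeze_zero_norm (fun n => ?_) hgtend
    · have h1 : ((⌊(2:ℝ)^n * x⌋ : ℤ):ℝ) ≤ 2^n * x := Int.floor_le _
      have h2 : (2:ℝ)^n * x < ((⌊(2:ℝ)^n * x⌋ : ℤ):ℝ) + 1 := Int.lt_floor_add_one _
      rw [Real.norm_eq_abs, abs_sub_le_iff]
      have hp := two_pow_pos n
      constructor
      · have hle : ((⌊(2:ℝ)^n * x⌋ : ℤ):ℝ)/2^n ≤ x := by
          rw [div_le_iff₀ hp]
          nlinarith
        have : (0:ℝ) ≤ 1/2^n := by positivity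
        linarith
      · have hlt : x < (((⌊(2:ℝ)^n * x⌋ : ℤ):ℝ)+1)/2^n := by
          rw [lt_div_iff₀ hp]
          nlinarith
        have he : (((⌊(2:ℝ)^n * x⌋ : ℤ):ℝ)+1)/2^n
            = ((⌊(2:ℝ)^n * x⌋ : ℤ):ℝ)/2^n + 1/2^n := by ring
        linarith
  -- measurability of the kernel integrals
  have hg_meas : StronglyMeasurable (fun v => ∫ x, f x ∂(κ v)) :=
    StronglyMeasurable.integral_kernel_prod_right (κ := κ) (f := fun _ x => f x)
      (hf.comp continuous_snd).stronglyMeasurable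
  have hgb_meas : ∀ n : ℕ, StronglyMeasurable
      (fun v => ∫ x, f (((⌊(2:ℝ)^n * x⌋ : ℤ):ℝ)/2^n) ∂(κ v)) := fun n =>
    StronglyMeasurable.integral_kernel_prod_right (κ := κ)
      (f := fun _ x => f (((⌊(2:ℝ)^n * x⌋ : ℤ):ℝ)/2^n))
      (((hf.measurable.comp (hsn_meas n)).comp measurable_snd).stronglyMeasurable)
  have hgn_meas : ∀ n : ℕ, StronglyMeasurable (fun v => ∫ x, f x ∂(κn n v)) := fun n =>
    StronglyMeasurable.integral_kernel_prod_right (κ := κn n) (f := fun _ x => f x)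
      (hf.comp continuous_snd).stronglyMeasurable
  -- bounds
  have hg_bd : ∀ v, |∫ x, f x ∂(κ v)| ≤ M := fun v => abs_integral_le hM
  have hgb_bd : ∀ (n : ℕ) v, |∫ x, f (((⌊(2:ℝ)^n * x⌋ : ℤ):ℝ)/2^n) ∂(κ v)| ≤ M :=
    fun n v => abs_integral_le (fun x => hM _)
  have hgn_bd : ∀ (n : ℕ) v, |∫ x, f x ∂(κn n v)| ≤ M := fun n v => abs_integral_le hM
  -- representation of the rounded integral as a finite sum
  have hgb_eq : ∀ (n : ℕ) v, ∫ x, f (((⌊(2:ℝ)^n * x⌋ : ℤ):ℝ)/2^n) ∂(κ v)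
      = ∑ l ∈ Finset.Ico (xlo * 2^n) (xhi * 2^n),
          (κ v (dyadicCell n l)).toReal * f ((l:ℝ)/2^n) := by
    intro n v
    have hae : ∀ᵐ x ∂(κ v), x ∈ Set.Ico (xlo:ℝ) (xhi:ℝ) := by
      rw [ae_iff]
      exact hκX v
    have hrep : ∀ᵐ x ∂(κ v), f (((⌊(2:ℝ)^n * x⌋ : ℤ):ℝ)/2^n)
        = ∑ l ∈ Finset.Ico (xlo * 2^n) (xhi * 2^n),
            (dyadicCell n l).indicator (fun _ => f ((l:ℝ)/2^n)) x := by
      filter_upwards [hae] with x hx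
      rw [← hXunion n, Set.mem_iUnion₂] at hx
      obtain ⟨l, hl, hxl⟩ := hx
      have hfl : ⌊(2:ℝ)^n * x⌋ = l := mem_dyadicCell_iff.1 hxl
      rw [Finset.sum_eq_single l]
      · rw [Set.indicator_of_mem hxl, hfl]
      · intro l' _ hne
        exact Set.indicator_of_notMem
          (fun hxl' => hne ((mem_dyadicCell_iff.1 hxl').symm.trans hfl)) _
      · intro hnotin
        exact absurd hl hnotin
    rw [integral_congr_ae hrep, integral_finset_sum]
    · refine Finset.sum_congr rfl fun l _ => ?_
      rw [integral_indicator_const _ (measurableSet_dyadicCell n l), smul_eq_mul, measureReal_def]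
    · intro l _
      exact (integrable_const (f ((l:ℝ)/2^n))).indicator (measurableSet_dyadicCell n l)
  -- product measure of a dyadic rectangle
  have hprod : ∀ (n : ℕ) (k l : ℤ),
      ∫ v in dyadicCell n k, (κ v (dyadicCell n l)).toReal ∂ν
        = ((ν ⊗ₘ κ) (dyadicCell n k ×ˢ dyadicCell n l)).toReal := by
    intro n k l
    rw [Measure.compProd_apply_prod (measurableSet_dyadicCell n k)
      (measurableSet_dyadicCell n l)]
    exact integral_toReal
      ((Kernel.measurable_coe κ (measurableSet_dyadicCell n l)).aemeasurable)
      (Eventually.of_forall fun v => measure_lt_top _ _)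
  -- integral of the rounded function over a cell
  have hGB : ∀ (n : ℕ) (k : ℤ),
      ∫ v in dyadicCell n k, (∫ x, f (((⌊(2:ℝ)^n * x⌋ : ℤ):ℝ)/2^n) ∂(κ v)) ∂ν
        = ∑ l ∈ Finset.Ico (xlo * 2^n) (xhi * 2^n),
            ((ν ⊗ₘ κ) (dyadicCell n k ×ˢ dyadicCell n l)).toReal * f ((l:ℝ)/2^n) := by
    intro n k
    rw [setIntegral_congr_fun (measurableSet_dyadicCell n k) (fun v _ => hgb_eq n v),
      integral_finset_sum]
    · exact Finset.sum_congr rfl fun l _ => by rw [integral_mul_const, hprod n k l]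
    · intro l _
      refine (integrable_of_bounded' (C := M) ?_ ?_).restrict
      · exact (((Kernel.measurable_coe κ
          (measurableSet_dyadicCell n l)).ennreal_toReal).mul_const _).aestronglyMeasurable
      · intro v
        rw [abs_mul]
        have h1 : |(κ v (dyadicCell n l)).toReal| ≤ 1 := by
          rw [abs_of_nonneg ENNReal.toReal_nonneg]
          simpa using ENNReal.toReal_mono (by norm_num) (prob_le_one (μ := κ v))
        calc |(κ v (dyadicCell n l)).toReal| * |f ((l:ℝ)/2^n)| ≤ 1 * M :=
              mul_le_mul h1 (hM _) (abs_nonneg _) one_pos.le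
          _ = M := one_mul M
  -- constancy of the discretised integral on a positive cell
  have hGN : ∀ (n : ℕ) (k : ℤ), k ∈ Finset.Ico (0:ℤ) (2^n) → ν (dyadicCell n k) ≠ 0 →
      ∀ v ∈ dyadicCell n k, (∫ x, f x ∂(κn n v))
        = ∑ l ∈ Finset.Ico (xlo * 2^n) (xhi * 2^n),
            ((ν ⊗ₘ κ) (dyadicCell n k ×ˢ dyadicCell n l) / ν (dyadicCell n k)).toReal
              * f ((l:ℝ)/2^n) := by
    intro n k hk hνk v hv
    have hvI : v ∈ Set.Ico (0:ℝ) 1 := by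
      rw [← hIunion n]
      exact Set.mem_iUnion₂.2 ⟨k, hk, hv⟩
    have hfl : ⌊(2:ℝ)^n * v⌋ = k := mem_dyadicCell_iff.1 hv
    have hd := hdisc n v hvI
    rw [hfl] at hd
    rw [hd.1 hνk]
    have hwne : ∀ l : ℤ,
        ((ν ⊗ₘ κ) (dyadicCell n k ×ˢ dyadicCell n l) / ν (dyadicCell n k)) ≠ ⊤ :=
      fun l => (ENNReal.div_lt_top (measure_ne_top _ _) hνk).ne
    rw [integral_finset_sum_measure (fun (l : ℤ) (_ : l ∈ Finset.Ico (xlo * 2^n) (xhi * 2^n)) =>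
      Integrable.smul_measure
        (integrable_of_bounded' (μ := Measure.dirac ((l:ℝ)/2^n))
          hf.aestronglyMeasurable hM) (hwne l))]
    refine Finset.sum_congr rfl fun l _ => ?_
    rw [integral_smul_measure, integral_dirac, smul_eq_mul]
  -- a.e. identification of A with A ∩ [0,1)
  have hAae : (A : Set ℝ) =ᵐ[ν] ((A ∩ Set.Ico (0:ℝ) 1 : Set ℝ) : Set ℝ) := by
    rw [MeasureTheory.ae_eq_set]
    constructor
    · exact measure_mono_null
        (fun x hx' => fun hxI => hx'.2 ⟨hx'.1, hxI⟩) hνIc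
    · rw [Set.diff_eq_empty.2 Set.inter_subset_left]
      exact measure_empty
  -- key identity: the discretised integral equals the averaged integral
  have key : ∀ n : ℕ, ∫ v in A, (∫ x, f x ∂(κn n v)) ∂ν
      = ∫ v in Set.Ico (0:ℝ) 1, dyAvg ν (A.indicator 1) n v
          * (∫ x, f (((⌊(2:ℝ)^n * x⌋ : ℤ):ℝ)/2^n) ∂(κ v)) ∂ν := by
    intro n
    rw [setIntegral_congr_set hAae]
    have hsplit : A ∩ Set.Ico (0:ℝ) 1
        = ⋃ k ∈ Finset.Ico (0:ℤ) (2^n), A ∩ dyadicCell n k := by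
      rw [← hIunion n, Set.inter_iUnion₂]
    rw [hsplit, ← hIunion n]
    rw [integral_biUnion_finset _ (fun k _ => hA.inter (measurableSet_dyadicCell n k))
        (fun k _ k' _ h => (dyadicCell_disjoint h).mono Set.inter_subset_right
          Set.inter_subset_right)
        (fun k _ => (integrable_of_bounded' (C := M) (hgn_meas n).aestronglyMeasurable
          (fun v => hgn_bd n v)).restrict),
      integral_biUnion_finset _ (fun k _ => measurableSet_dyadicCell n k)
        (fun k _ k' _ h => dyadicCell_disjoint h)
        (fun k _ => (integrable_of_bounded' (C := M) ?_ ?_).restrict)]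
    rotate_left
    · exact ((dyAvg_measurable ν (A.indicator 1) n).mul
        (hgb_meas n).measurable).aestronglyMeasurable
    · intro v
      rw [abs_mul]
      calc |dyAvg ν (A.indicator 1) n v| * |∫ x, f (((⌊(2:ℝ)^n * x⌋ : ℤ):ℝ)/2^n) ∂(κ v)|
          ≤ 1 * M := mul_le_mul
            (dyAvg_abs_le ν (measurable_one.indicator hA).aestronglyMeasurable
              (indicator_abs_le A) n v)
            (hgb_bd n v) (abs_nonneg _) one_pos.le
        _ = M := one_mul M
    refine Finset.sum_congr rfl fun k hk => ?_
    by_cases hνk : ν (dyadicCell n k) = 0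
    · rw [Measure.restrict_eq_zero.2 (measure_mono_null Set.inter_subset_right hνk),
        Measure.restrict_eq_zero.2 hνk]
      simp
    · rw [setIntegral_congr_fun (hA.inter (measurableSet_dyadicCell n k))
        (fun v hv => hGN n k hk hνk v hv.2), setIntegral_const, smul_eq_mul, measureReal_def]
      have hval : ∀ v ∈ dyadicCell n k, dyAvg ν (A.indicator 1) n v
          * (∫ x, f (((⌊(2:ℝ)^n * x⌋ : ℤ):ℝ)/2^n) ∂(κ v))
          = ((ν (A ∩ dyadicCell n k)).toReal / (ν (dyadicCell n k)).toReal)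
            * (∫ x, f (((⌊(2:ℝ)^n * x⌋ : ℤ):ℝ)/2^n) ∂(κ v)) := by
        intro v hv
        rw [dyAvg_eq_on_cell hv]
        congr 2
        rw [setIntegral_indicator hA]
        simp only [Pi.one_apply]
        rw [setIntegral_const, smul_eq_mul, mul_one, measureReal_def, Set.inter_comm]
      rw [setIntegral_congr_fun (measurableSet_dyadicCell n k) hval,
        integral_const_mul, hGB n k, Finset.mul_sum, Finset.mul_sum]
      refine Finset.sum_congr rfl fun l _ => ?_
      rw [ENNReal.toReal_div]
      have hb0 : (ν (dyadicCell n k)).toReal ≠ 0 :=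
        (ENNReal.toReal_pos hνk (measure_ne_top _ _)).ne'
      field_simp
  -- L¹ convergence of the conditional averages
  have hεn := dyAvg_L1_tendsto_indicator ν hνIc hA
  -- convergence of the "rounded" integrals
  have hgb_tendsto : ∀ v, Tendsto
      (fun n : ℕ => ∫ x, f (((⌊(2:ℝ)^n * x⌋ : ℤ):ℝ)/2^n) ∂(κ v)) atTop
      (nhds (∫ x, f x ∂(κ v))) := by
    intro v
    apply tendsto_integral_of_dominated_convergence (bound := fun _ => M)
    · intro n
      exact (hf.measurable.comp (hsn_meas n)).aestronglyMeasurable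
    · exact integrable_const M
    · intro n
      exact Eventually.of_forall fun x => by rw [Real.norm_eq_abs]; exact hM _
    · exact Eventually.of_forall fun x => (hf.tendsto x).comp (hsn_tendsto x)
  have hS : Tendsto (fun n : ℕ => ∫ v in Set.Ico (0:ℝ) 1,
      A.indicator (1:ℝ→ℝ) v * (∫ x, f (((⌊(2:ℝ)^n * x⌋ : ℤ):ℝ)/2^n) ∂(κ v)) ∂ν) atTop
      (nhds (∫ v in A, (∫ x, f x ∂(κ v)) ∂ν)) := by
    have hrw : ∀ n : ℕ, ∫ v in Set.Ico (0:ℝ) 1,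
        A.indicator (1:ℝ→ℝ) v * (∫ x, f (((⌊(2:ℝ)^n * x⌋ : ℤ):ℝ)/2^n) ∂(κ v)) ∂ν
        = ∫ v in Set.Ico (0:ℝ) 1 ∩ A,
            (∫ x, f (((⌊(2:ℝ)^n * x⌋ : ℤ):ℝ)/2^n) ∂(κ v)) ∂ν := by
      intro n
      rw [← setIntegral_indicator hA]
      refine setIntegral_congr_fun measurableSet_Ico fun v _ => ?_
      by_cases hv : v ∈ A <;> simp [hv]
    have htarget : ∫ v in A, (∫ x, f x ∂(κ v)) ∂ν
        = ∫ v in Set.Ico (0:ℝ) 1 ∩ A, (∫ x, f x ∂(κ v)) ∂ν := by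
      refine setIntegral_congr_set (hAae.trans ?_)
      rw [Set.inter_comm]
      exact Filter.EventuallyEq.rfl
    rw [htarget]
    have hfun : (fun n : ℕ => ∫ v in Set.Ico (0:ℝ) 1,
        A.indicator (1:ℝ→ℝ) v * (∫ x, f (((⌊(2:ℝ)^n * x⌋ : ℤ):ℝ)/2^n) ∂(κ v)) ∂ν)
        = fun n : ℕ => ∫ v in Set.Ico (0:ℝ) 1 ∩ A,
            (∫ x, f (((⌊(2:ℝ)^n * x⌋ : ℤ):ℝ)/2^n) ∂(κ v)) ∂ν := funext hrw
    rw [hfun]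
    apply tendsto_integral_of_dominated_convergence (bound := fun _ => M)
    · intro n
      exact (hgb_meas n).aestronglyMeasurable.restrict
    · exact integrable_const M
    · intro n
      exact Eventually.of_forall fun v => by rw [Real.norm_eq_abs]; exact hgb_bd n v
    · exact Eventually.of_forall fun v => hgb_tendsto v
  -- difference bound
  have hdiffb : ∀ n : ℕ, |(∫ v in Set.Ico (0:ℝ) 1, dyAvg ν (A.indicator 1) n v
      * (∫ x, f (((⌊(2:ℝ)^n * x⌋ : ℤ):ℝ)/2^n) ∂(κ v)) ∂ν)
      - ∫ v in Set.Ico (0:ℝ) 1, A.indicator (1:ℝ→ℝ) v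
          * (∫ x, f (((⌊(2:ℝ)^n * x⌋ : ℤ):ℝ)/2^n) ∂(κ v)) ∂ν|
      ≤ M * ∫ v in Set.Ico (0:ℝ) 1,
          |dyAvg ν (A.indicator 1) n v - A.indicator 1 v| ∂ν := by
    intro n
    have hmA : Measurable (A.indicator (1:ℝ→ℝ)) := measurable_one.indicator hA
    have hint1 : IntegrableOn (fun v => dyAvg ν (A.indicator 1) n v
        * (∫ x, f (((⌊(2:ℝ)^n * x⌋ : ℤ):ℝ)/2^n) ∂(κ v))) (Set.Ico (0:ℝ) 1) ν := by
      refine (integrable_of_bounded' (C := M) ?_ ?_).restrict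
      · exact ((dyAvg_measurable ν (A.indicator 1) n).mul
          (hgb_meas n).measurable).aestronglyMeasurable
      · intro v
        rw [abs_mul]
        calc _ ≤ 1 * M := mul_le_mul
              (dyAvg_abs_le ν hmA.aestronglyMeasurable (indicator_abs_le A) n v)
              (hgb_bd n v) (abs_nonneg _) one_pos.le
          _ = M := one_mul M
    have hint2 : IntegrableOn (fun v => A.indicator (1:ℝ→ℝ) v
        * (∫ x, f (((⌊(2:ℝ)^n * x⌋ : ℤ):ℝ)/2^n) ∂(κ v))) (Set.Ico (0:ℝ) 1) ν := by
      refine (integrable_of_bounded' (C := M) ?_ ?_).restrict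
      · exact (hmA.mul (hgb_meas n).measurable).aestronglyMeasurable
      · intro v
        rw [abs_mul]
        calc _ ≤ 1 * M := mul_le_mul (indicator_abs_le A v)
              (hgb_bd n v) (abs_nonneg _) one_pos.le
          _ = M := one_mul M
    rw [← integral_sub hint1 hint2]
    have hintd : IntegrableOn
        (fun v => |dyAvg ν (A.indicator 1) n v - A.indicator 1 v| * M)
        (Set.Ico (0:ℝ) 1) ν := by
      refine (integrable_of_bounded' (C := 2 * M) ?_ ?_).restrict
      · exact ((((dyAvg_measurable ν (A.indicator 1) n).sub hmA).abs).mul_const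
          M).aestronglyMeasurable
      · intro v
        rw [abs_mul, abs_abs, abs_of_pos hMpos]
        have : |dyAvg ν (A.indicator 1) n v - A.indicator 1 v| ≤ 2 := by
          calc |dyAvg ν (A.indicator 1) n v - A.indicator 1 v|
              ≤ |dyAvg ν (A.indicator 1) n v| + |A.indicator (1:ℝ→ℝ) v| := by
                simpa [sub_eq_add_neg, abs_neg] using
                  abs_add_le (dyAvg ν (A.indicator 1) n v) (-(A.indicator (1:ℝ→ℝ) v))
            _ ≤ 1 + 1 := add_le_add (dyAvg_abs_le ν hmA.aestronglyMeasurable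
                (indicator_abs_le A) n v) (indicator_abs_le A v)
            _ = 2 := by norm_num
        exact mul_le_mul_of_nonneg_right this hMpos.le
    calc |∫ v in Set.Ico (0:ℝ) 1, (dyAvg ν (A.indicator 1) n v
          * (∫ x, f (((⌊(2:ℝ)^n * x⌋ : ℤ):ℝ)/2^n) ∂(κ v))
          - A.indicator (1:ℝ→ℝ) v
          * (∫ x, f (((⌊(2:ℝ)^n * x⌋ : ℤ):ℝ)/2^n) ∂(κ v))) ∂ν|
        ≤ ∫ v in Set.Ico (0:ℝ) 1, |dyAvg ν (A.indicator 1) n v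
          * (∫ x, f (((⌊(2:ℝ)^n * x⌋ : ℤ):ℝ)/2^n) ∂(κ v))
          - A.indicator (1:ℝ→ℝ) v
          * (∫ x, f (((⌊(2:ℝ)^n * x⌋ : ℤ):ℝ)/2^n) ∂(κ v))| ∂ν := by
          have hnn := norm_integral_le_integral_norm
            (μ := ν.restrict (Set.Ico (0:ℝ) 1))
            (f := fun v => dyAvg ν (A.indicator 1) n v
              * (∫ x, f (((⌊(2:ℝ)^n * x⌋ : ℤ):ℝ)/2^n) ∂(κ v))
              - A.indicator (1:ℝ→ℝ) v
              * (∫ x, f (((⌊(2:ℝ)^n * x⌋ : ℤ):ℝ)/2^n) ∂(κ v)))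
          simpa [Real.norm_eq_abs] using hnn
      _ ≤ ∫ v in Set.Ico (0:ℝ) 1,
            |dyAvg ν (A.indicator 1) n v - A.indicator 1 v| * M ∂ν := by
          refine integral_mono ((hint1.sub hint2).abs) hintd fun v => ?_
          rw [← sub_mul, abs_mul]
          exact mul_le_mul_of_nonneg_left (hgb_bd n v) (abs_nonneg _)
      _ = M * ∫ v in Set.Ico (0:ℝ) 1,
            |dyAvg ν (A.indicator 1) n v - A.indicator 1 v| ∂ν := by
          rw [integral_mul_const, mul_comm]
  -- conclusion
  have hdiff0 : Tendsto (fun n : ℕ => (∫ v in Set.Ico (0:ℝ) 1, dyAvg ν (A.indicator 1) n v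
      * (∫ x, f (((⌊(2:ℝ)^n * x⌋ : ℤ):ℝ)/2^n) ∂(κ v)) ∂ν)
      - ∫ v in Set.Ico (0:ℝ) 1, A.indicator (1:ℝ→ℝ) v
          * (∫ x, f (((⌊(2:ℝ)^n * x⌋ : ℤ):ℝ)/2^n) ∂(κ v)) ∂ν) atTop (nhds 0) := by
    refine squeeze_zero_norm (fun n => ?_) (by simpa using hεn.const_mul M)
    rw [Real.norm_eq_abs]
    exact hdiffb n
  have hfinal := hS.add hdiff0
  have hfuneq : (fun n : ℕ => (∫ v in Set.Ico (0:ℝ) 1, A.indicator (1:ℝ→ℝ) v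
      * (∫ x, f (((⌊(2:ℝ)^n * x⌋ : ℤ):ℝ)/2^n) ∂(κ v)) ∂ν)
      + ((∫ v in Set.Ico (0:ℝ) 1, dyAvg ν (A.indicator 1) n v
          * (∫ x, f (((⌊(2:ℝ)^n * x⌋ : ℤ):ℝ)/2^n) ∂(κ v)) ∂ν)
        - ∫ v in Set.Ico (0:ℝ) 1, A.indicator (1:ℝ→ℝ) v
          * (∫ x, f (((⌊(2:ℝ)^n * x⌋ : ℤ):ℝ)/2^n) ∂(κ v)) ∂ν))
      = fun n : ℕ => ∫ v in A, ∫ x, f x ∂(κn n v) ∂ν := by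
    funext n
    rw [key n]
    ring
  rw [hfuneq] at hfinal
  simpa using hfinal
end

section
/- Let ζ ≪ λ be a probability measure on ℝ, (ξⁿ) Young measures from ([0,1], ν) to a compact E_X with ξⁿ → ξ narrowly, (Sⁿ) Borel functions on a compact E_Y with |Sⁿ| ≤ 1, and suppose forward convex combinations ∑ₖ λₙ,ₖ S^{n+k} converge λ-a.e. to a Borel function S. Then ∑ₖ λₙ,ₖ ∫∫∫ x·S^{n+k}(x+z) ζ(dz) ξ^{n+k}(v,dx) ν(dv) → ∫∫∫ x·S(x+z) ζ(dz) ξ(v,dx) ν(dv) as n → ∞. -/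
open MeasureTheory ProbabilityTheory Filter Finset


private lemma integrable_comp_snd_prod' {h : ℝ → ℝ} (hm : Measurable h)
    (hh : Integrable h (volume : Measure ℝ)) (ρ : Measure ℝ) [IsProbabilityMeasure ρ] :
    Integrable (fun p : ℝ × ℝ => h p.2) (ρ.prod volume) := by
  have hmap : (ρ.prod (volume : Measure ℝ)).map Prod.snd = volume := by
    rw [Measure.map_snd_prod]; simp
  have h1 : Integrable h ((ρ.prod volume).map Prod.snd) := by rw [hmap]; exact hh
  have h2 : AEStronglyMeasurable h ((ρ.prod volume).map Prod.snd) := by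
    rw [hmap]; exact hm.aestronglyMeasurable
  exact (integrable_map_measure h2 measurable_snd.aemeasurable).mp h1

/-- the convex combinations are bounded by 1 in absolute value -/
private lemma comb_abs_le_one (S : ℕ → ℝ → ℝ) (kn : ℕ → ℕ) (lam : ℕ → ℕ → ℝ)
    (hSbdd : ∀ n y, |S n y| ≤ 1) (hlam0 : ∀ n k, 0 ≤ lam n k)
    (hlam1 : ∀ n, ∑ k ∈ Finset.range (kn n + 1), lam n k = 1) (n : ℕ) (y : ℝ) :
    |∑ k ∈ Finset.range (kn n + 1), lam n k * S (n + k) y| ≤ 1 := by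
  calc |∑ k ∈ Finset.range (kn n + 1), lam n k * S (n + k) y|
      ≤ ∑ k ∈ Finset.range (kn n + 1), |lam n k * S (n + k) y| :=
        Finset.abs_sum_le_sum_abs _ _
    _ ≤ ∑ k ∈ Finset.range (kn n + 1), lam n k := by
        refine Finset.sum_le_sum fun k _ => ?_
        rw [abs_mul, abs_of_nonneg (hlam0 n k)]
        nlinarith [hSbdd (n + k) y, hlam0 n k, abs_nonneg (S (n + k) y)]
    _ = 1 := hlam1 n

private lemma slim_abs_le_one (S : ℕ → ℝ → ℝ) (Slim : ℝ → ℝ) (kn : ℕ → ℕ) (lam : ℕ → ℕ → ℝ)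
    (hSbdd : ∀ n y, |S n y| ≤ 1) (hlam0 : ∀ n k, 0 ≤ lam n k)
    (hlam1 : ∀ n, ∑ k ∈ Finset.range (kn n + 1), lam n k = 1)
    (hae : ∀ᵐ y ∂(volume : Measure ℝ),
      Tendsto (fun n => ∑ k ∈ Finset.range (kn n + 1), lam n k * S (n + k) y)
        atTop (nhds (Slim y))) :
    ∀ᵐ y ∂(volume : Measure ℝ), |Slim y| ≤ 1 := by
  filter_upwards [hae] with y hy
  exact le_of_tendsto hy.abs
    (Eventually.of_forall fun n => comb_abs_le_one S kn lam hSbdd hlam0 hlam1 n y)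

/-- translate of an a.e.(volume) bound to an a.e.(ζ) bound at shifted points -/
private lemma ae_shift (ζ : Measure ℝ) (hac : ζ ≪ (volume : Measure ℝ)) (u : ℝ → ℝ)
    (hu : ∀ᵐ w ∂(volume : Measure ℝ), |u w| ≤ 1) (x : ℝ) :
    ∀ᵐ z ∂ζ, |u (x + z)| ≤ 1 := by
  rw [ae_iff]
  apply hac
  have h1 : {z : ℝ | ¬ |u (x + z)| ≤ 1} = (fun z => x + z) ⁻¹' {w : ℝ | ¬ |u w| ≤ 1} := rfl
  rw [h1, measure_preimage_add]
  exact ae_iff.mp hu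

private lemma abs_integral_shift_le (ζ : Measure ℝ) [IsProbabilityMeasure ζ]
    (hac : ζ ≪ (volume : Measure ℝ)) (u : ℝ → ℝ)
    (hu : ∀ᵐ w ∂(volume : Measure ℝ), |u w| ≤ 1) (x : ℝ) :
    |∫ z, u (x + z) ∂ζ| ≤ 1 := by
  have h := norm_integral_le_of_norm_le_const (μ := ζ) (f := fun z => u (x + z)) (C := 1)
    ((ae_shift ζ hac u hu x).mono fun z hz => by simpa [Real.norm_eq_abs] using hz)
  simpa [Real.norm_eq_abs] using h

private lemma abs_add4_lt {X Y Z W ε : ℝ} (hX : |X| ≤ ε / 4) (hY : |Y| ≤ ε / 4)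
    (hZ : |Z| < ε / 4) (hW : |W| ≤ ε / 4) : |X + Y + Z + W| < ε := by
  have t1 := abs_add_le (X + Y + Z) W
  have t2 := abs_add_le (X + Y) Z
  have t3 := abs_add_le X Y
  linarith

set_option maxHeartbeats 2000000 in
private lemma aux_main
    (B : ℝ) (hB : 0 ≤ B) (K : Set ℝ) (hKm : MeasurableSet K) (hKb : ∀ x ∈ K, |x| ≤ B)
    (ζ : Measure ℝ) [IsProbabilityMeasure ζ] (hac : ζ ≪ (volume : Measure ℝ))
    (ρ : ℕ → Measure ℝ) (ρlim : Measure ℝ)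
    (hρp : ∀ m, IsProbabilityMeasure (ρ m)) (hρlp : IsProbabilityMeasure ρlim)
    (hρK : ∀ m, ρ m Kᶜ = 0) (hρlK : ρlim Kᶜ = 0)
    (hnar : ∀ f : ℝ → ℝ, Continuous f → (∃ M, ∀ x, |f x| ≤ M) →
      Tendsto (fun m => ∫ x, f x ∂(ρ m)) atTop (nhds (∫ x, f x ∂ρlim)))
    (S : ℕ → ℝ → ℝ) (Slim : ℝ → ℝ)
    (hSmeas : ∀ n, Measurable (S n)) (hSlimmeas : Measurable Slim)
    (hSbdd : ∀ n y, |S n y| ≤ 1)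
    (kn : ℕ → ℕ) (lam : ℕ → ℕ → ℝ)
    (hlam0 : ∀ n k, 0 ≤ lam n k)
    (hlam1 : ∀ n, ∑ k ∈ Finset.range (kn n + 1), lam n k = 1)
    (hae : ∀ᵐ y ∂(volume : Measure ℝ),
      Tendsto (fun n => ∑ k ∈ Finset.range (kn n + 1), lam n k * S (n + k) y)
        atTop (nhds (Slim y))) :
    Tendsto (fun n => ∑ k ∈ Finset.range (kn n + 1), lam n k *
        ∫ x, x * (∫ z, S (n + k) (x + z) ∂ζ) ∂(ρ (n + k)))
      atTop
      (nhds (∫ x, x * (∫ z, Slim (x + z) ∂ζ) ∂ρlim)) := by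
  classical
  haveI := hρlp
  -- the real Radon-Nikodym density of ζ
  set g : ℝ → ℝ := fun w => ((∂ζ/∂(volume : Measure ℝ)) w).toReal with hgdef
  have hg_meas : Measurable g := (Measure.measurable_rnDeriv ζ volume).ennreal_toReal
  have hg_int : Integrable g (volume : Measure ℝ) := Measure.integrable_toReal_rnDeriv
  -- the basic change-of-variables identity
  have φident : ∀ u : ℝ → ℝ, ∀ x : ℝ,
      (∫ z, u (x + z) ∂ζ) = ∫ w, u w * g (w - x) ∂volume := by
    intro u x
    have h1 := integral_rnDeriv_smul (μ := ζ) (ν := volume) (f := fun z => u (x + z)) hac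
    have h2 := integral_sub_right_eq_self (μ := volume)
      (fun z => ((∂ζ/∂(volume : Measure ℝ)) z).toReal • u (x + z)) x
    rw [← h1, ← h2]
    congr 1
    funext w
    have hxw : x + (w - x) = w := by ring
    simp only [hxw, smul_eq_mul, hgdef]
    ring
  -- measurability of shifted integrals
  have hφmeas : ∀ u : ℝ → ℝ, Measurable u →
      StronglyMeasurable (fun x => ∫ z, u (x + z) ∂ζ) := by
    intro u hu
    exact ((hu.comp (measurable_fst.add measurable_snd) :
      Measurable fun p : ℝ × ℝ => u (p.1 + p.2)).stronglyMeasurable).integral_prod_right'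
  have hSub : ∀ m, ∀ᵐ w ∂(volume : Measure ℝ), |S m w| ≤ 1 :=
    fun m => Eventually.of_forall (hSbdd m)
  have hSlimub : ∀ᵐ w ∂(volume : Measure ℝ), |Slim w| ≤ 1 :=
    slim_abs_le_one S Slim kn lam hSbdd hlam0 hlam1 hae
  rw [Metric.tendsto_atTop]
  intro ε hε
  set δ : ℝ := ε / (4 * (B + 1)) with hδdef
  have hδ : 0 < δ := by positivity
  obtain ⟨gc, gc_cs, gc_close, gc_cont, gc_int⟩ :=
    hg_int.exists_hasCompactSupport_integral_sub_le hδ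
  -- a sup bound for gc
  obtain ⟨Mg, hMg0, hMg⟩ : ∃ Mg : ℝ, 0 ≤ Mg ∧ ∀ y, |gc y| ≤ Mg := by
    obtain ⟨C, hC⟩ := gc_cs.exists_bound_of_continuous gc_cont
    exact ⟨max C 0, le_max_right _ _, fun y =>
      le_trans (by simpa [Real.norm_eq_abs] using hC y) (le_max_left _ _)⟩
  -- a support radius for gc
  obtain ⟨R, hR0, hRz⟩ : ∃ R : ℝ, 0 < R ∧ ∀ y : ℝ, R ≤ |y| → gc y = 0 := by
    obtain ⟨r, hr⟩ := gc_cs.isBounded.subset_closedBall 0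
    refine ⟨max r 0 + 1, by positivity, fun y hy => ?_⟩
    apply image_eq_zero_of_notMem_tsupport
    intro hmem
    have h1 := hr hmem
    rw [Metric.mem_closedBall, Real.dist_eq, sub_zero] at h1
    have h2 : |y| ≤ max r 0 := le_trans h1 (le_max_left _ _)
    have h3 : max r 0 + 1 ≤ |y| := hy
    linarith
  set J : Set ℝ := Set.Icc (-(B + R)) (B + R) with hJdef
  have hJmem : ∀ x ∈ K, ∀ w : ℝ, gc (w - x) ≠ 0 → w ∈ J := by
    intro x hx w hw
    have h1 : |w - x| < R := by
      by_contra hcon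
      push_neg at hcon
      exact hw (hRz _ hcon)
    have h2 : |x| ≤ B := hKb x hx
    have h3 : |w| ≤ B + R := by
      have := abs_add_le (w - x) x
      have h4 : w - x + x = w := by ring
      rw [h4] at this
      linarith
    rw [hJdef, Set.mem_Icc]
    constructor <;> [linarith [neg_abs_le w]; linarith [le_abs_self w]]
  have hJind_int : Integrable (J.indicator (fun _ => (1 : ℝ))) (volume : Measure ℝ) := by
    rw [integrable_indicator_iff measurableSet_Icc]
    exact integrableOn_const measure_Icc_lt_top.ne
  -- the smoothed kernel integrals
  have measfact : ∀ ρ' : Measure ℝ, IsProbabilityMeasure ρ' → ρ' Kᶜ = 0 →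
      (∀ w : ℝ, |∫ x, x * gc (w - x) ∂ρ'| ≤ B * Mg) ∧
      (∀ w : ℝ, w ∉ J → (∫ x, x * gc (w - x) ∂ρ') = 0) ∧
      Continuous (fun w => ∫ x, x * gc (w - x) ∂ρ') := by
    intro ρ' hp hK0
    haveI := hp
    have haeK : ∀ᵐ x ∂ρ', x ∈ K := by
      rw [ae_iff]
      simpa [Set.compl_def] using hK0
    have haebd : ∀ w : ℝ, ∀ᵐ x ∂ρ', ‖x * gc (w - x)‖ ≤ B * Mg := by
      intro w
      refine haeK.mono fun x hx => ?_
      rw [Real.norm_eq_abs, abs_mul]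
      exact mul_le_mul (hKb x hx) (hMg _) (abs_nonneg _) hB
    have hmeas : ∀ w : ℝ, AEStronglyMeasurable (fun x => x * gc (w - x)) ρ' :=
      fun w => (measurable_id.mul
        (gc_cont.measurable.comp (measurable_const.sub measurable_id))).aestronglyMeasurable
    refine ⟨?_, ?_, ?_⟩
    · intro w
      have h := norm_integral_le_of_norm_le_const (μ := ρ') (haebd w)
      simpa [Real.norm_eq_abs] using h
    · intro w hw
      apply integral_eq_zero_of_ae
      refine haeK.mono fun x hx => ?_
      have hz : gc (w - x) = 0 := by
        by_contra h
        exact hw (hJmem x hx w h)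
      simp [hz]
    · refine continuous_of_dominated hmeas (fun w => haebd w) (integrable_const _) ?_
      exact Eventually.of_forall fun x =>
        continuous_const.mul (gc_cont.comp (continuous_id.sub continuous_const))
  have fub : ∀ ρ' : Measure ℝ, IsProbabilityMeasure ρ' → ρ' Kᶜ = 0 →
      ∀ u : ℝ → ℝ, Measurable u → (∀ᵐ w ∂(volume : Measure ℝ), |u w| ≤ 1) →
      ∫ x, x * (∫ w, u w * gc (w - x) ∂volume) ∂ρ'
        = ∫ w, u w * (∫ x, x * gc (w - x) ∂ρ') ∂volume := by
    intro ρ' hp hK0 u hum hub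
    haveI := hp
    set f : ℝ → ℝ → ℝ := fun x w => u w * (x * gc (w - x)) with hfdef
    have hfmeas : Measurable (Function.uncurry f) :=
      (hum.comp measurable_snd).mul
        (measurable_fst.mul (gc_cont.measurable.comp (measurable_snd.sub measurable_fst)))
    have hbound_int : Integrable
        (fun p : ℝ × ℝ => (B * Mg) * J.indicator (fun _ => (1 : ℝ)) p.2) (ρ'.prod volume) := by
      exact (integrable_comp_snd_prod' (measurable_one.indicator measurableSet_Icc)
        hJind_int ρ').const_mul _
    have haeprod1 : ∀ᵐ p : ℝ × ℝ ∂(ρ'.prod volume), p.1 ∈ K := by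
      rw [ae_iff]
      have hset : {p : ℝ × ℝ | ¬ p.1 ∈ K} = Kᶜ ×ˢ (Set.univ : Set ℝ) := by
        ext p
        simp [Set.mem_prod]
      rw [hset, Measure.prod_prod, hK0, zero_mul]
    have haeprod2 : ∀ᵐ p : ℝ × ℝ ∂(ρ'.prod volume), |u p.2| ≤ 1 := by
      rw [ae_iff]
      have hset : {p : ℝ × ℝ | ¬ |u p.2| ≤ 1} = (Set.univ : Set ℝ) ×ˢ {w : ℝ | ¬ |u w| ≤ 1} := by
        ext p
        simp [Set.mem_prod]
      rw [hset, Measure.prod_prod, ae_iff.mp hub, mul_zero]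
    have hint : Integrable (Function.uncurry f) (ρ'.prod volume) := by
      refine Integrable.mono' hbound_int hfmeas.aestronglyMeasurable ?_
      filter_upwards [haeprod1, haeprod2] with p hp1 hp2
      by_cases hgz : gc (p.2 - p.1) = 0
      · have : Function.uncurry f p = 0 := by
          simp [Function.uncurry, hfdef, hgz]
        rw [this, norm_zero]
        exact mul_nonneg (mul_nonneg hB hMg0) (Set.indicator_nonneg (fun _ _ => zero_le_one) _)
      · have hJw : p.2 ∈ J := hJmem p.1 hp1 p.2 hgz
        rw [Set.indicator_of_mem hJw, mul_one]
        have h1 : ‖Function.uncurry f p‖ = |u p.2| * (|p.1| * |gc (p.2 - p.1)|) := by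
          simp [Function.uncurry, hfdef, Real.norm_eq_abs, abs_mul]
        rw [h1]
        have h2 : |p.1| ≤ B := hKb _ hp1
        have h3 := hMg (p.2 - p.1)
        have h4 : |p.1| * |gc (p.2 - p.1)| ≤ B * Mg :=
          mul_le_mul h2 h3 (abs_nonneg _) hB
        calc |u p.2| * (|p.1| * |gc (p.2 - p.1)|) ≤ 1 * (B * Mg) :=
              mul_le_mul hp2 h4 (mul_nonneg (abs_nonneg _) (abs_nonneg _)) zero_le_one
          _ = B * Mg := one_mul _
    have swap := integral_integral_swap hint
    calc ∫ x, x * (∫ w, u w * gc (w - x) ∂volume) ∂ρ'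
        = ∫ x, ∫ w, f x w ∂volume ∂ρ' := by
          refine integral_congr_ae (Eventually.of_forall fun x => ?_)
          show x * (∫ w, u w * gc (w - x) ∂volume) = ∫ w, f x w ∂volume
          rw [← integral_const_mul]
          refine integral_congr_ae (Eventually.of_forall fun w => ?_)
          simp only [hfdef]
          ring
      _ = ∫ w, ∫ x, f x w ∂ρ' ∂volume := swap
      _ = ∫ w, u w * (∫ x, x * gc (w - x) ∂ρ') ∂volume := by
          refine integral_congr_ae (Eventually.of_forall fun w => ?_)
          show (∫ x, f x w ∂ρ') = u w * ∫ x, x * gc (w - x) ∂ρ'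
          simp only [hfdef]
          rw [integral_const_mul]
  have keyest : ∀ ρ' : Measure ℝ, IsProbabilityMeasure ρ' → ρ' Kᶜ = 0 →
      ∀ u : ℝ → ℝ, Measurable u → (∀ᵐ w ∂(volume : Measure ℝ), |u w| ≤ 1) →
      |(∫ x, x * (∫ z, u (x + z) ∂ζ) ∂ρ')
        - ∫ w, u w * (∫ x, x * gc (w - x) ∂ρ') ∂volume| ≤ B * δ := by
    intro ρ' hp hK0 u hum hub
    haveI := hp
    have haeK : ∀ᵐ x ∂ρ', x ∈ K := by
      rw [ae_iff]
      simpa [Set.compl_def] using hK0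
    rw [← fub ρ' hp hK0 u hum hub]
    have hψφ : ∀ x : ℝ, |(∫ z, u (x + z) ∂ζ) - ∫ w, u w * gc (w - x) ∂volume| ≤ δ := by
      intro x
      have hint1 : Integrable (fun w => u w * g (w - x)) (volume : Measure ℝ) := by
        refine Integrable.mono' ((hg_int.comp_sub_right x).abs) ?_ ?_
        · exact (hum.mul (hg_meas.comp (measurable_id.sub measurable_const))).aestronglyMeasurable
        · filter_upwards [hub] with w hw
          rw [Real.norm_eq_abs, abs_mul]
          calc |u w| * |g (w - x)| ≤ 1 * |g (w - x)| :=
                mul_le_mul_of_nonneg_right hw (abs_nonneg _)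
            _ = |g (w - x)| := one_mul _
      have hint2 : Integrable (fun w => u w * gc (w - x)) (volume : Measure ℝ) := by
        refine Integrable.mono' ((gc_int.comp_sub_right x).abs) ?_ ?_
        · exact (hum.mul (gc_cont.measurable.comp
            (measurable_id.sub measurable_const))).aestronglyMeasurable
        · filter_upwards [hub] with w hw
          rw [Real.norm_eq_abs, abs_mul]
          calc |u w| * |gc (w - x)| ≤ 1 * |gc (w - x)| :=
                mul_le_mul_of_nonneg_right hw (abs_nonneg _)
            _ = |gc (w - x)| := one_mul _
      rw [φident u x, ← integral_sub hint1 hint2]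
      have hb : ∀ᵐ w ∂(volume : Measure ℝ),
          ‖u w * g (w - x) - u w * gc (w - x)‖ ≤ ‖g (w - x) - gc (w - x)‖ := by
        filter_upwards [hub] with w hw
        rw [← mul_sub, norm_mul]
        calc ‖u w‖ * ‖g (w - x) - gc (w - x)‖ ≤ 1 * ‖g (w - x) - gc (w - x)‖ :=
              mul_le_mul_of_nonneg_right (by rwa [Real.norm_eq_abs]) (norm_nonneg _)
          _ = ‖g (w - x) - gc (w - x)‖ := one_mul _
      have hABS := norm_integral_le_of_norm_le
        (((hg_int.comp_sub_right x).sub (gc_int.comp_sub_right x)).norm) hb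
      have htrans : (∫ w, ‖g (w - x) - gc (w - x)‖ ∂volume) = ∫ w, ‖g w - gc w‖ ∂volume :=
        integral_sub_right_eq_self (fun w => ‖g w - gc w‖) x
      calc |∫ w, (u w * g (w - x) - u w * gc (w - x)) ∂volume|
          = ‖∫ w, (u w * g (w - x) - u w * gc (w - x)) ∂volume‖ := (Real.norm_eq_abs _).symm
        _ ≤ ∫ w, ‖g (w - x) - gc (w - x)‖ ∂volume := hABS
        _ = ∫ w, ‖g w - gc w‖ ∂volume := htrans
        _ ≤ δ := gc_close
    set C1 : ℝ := ∫ w, |gc w| ∂volume with hC1def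
    have hψbd : ∀ x : ℝ, |∫ w, u w * gc (w - x) ∂volume| ≤ C1 := by
      intro x
      have hb : ∀ᵐ w ∂(volume : Measure ℝ), ‖u w * gc (w - x)‖ ≤ |gc (w - x)| := by
        filter_upwards [hub] with w hw
        rw [Real.norm_eq_abs, abs_mul]
        calc |u w| * |gc (w - x)| ≤ 1 * |gc (w - x)| :=
              mul_le_mul_of_nonneg_right hw (abs_nonneg _)
          _ = |gc (w - x)| := one_mul _
      have h := norm_integral_le_of_norm_le ((gc_int.comp_sub_right x).abs) hb
      have htrans : (∫ w, |gc (w - x)| ∂volume) = ∫ w, |gc w| ∂volume :=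
        integral_sub_right_eq_self (fun w => |gc w|) x
      calc |∫ w, u w * gc (w - x) ∂volume|
          = ‖∫ w, u w * gc (w - x) ∂volume‖ := (Real.norm_eq_abs _).symm
        _ ≤ ∫ w, |gc (w - x)| ∂volume := h
        _ = C1 := htrans
    have hφbd2 : ∀ x, |∫ z, u (x + z) ∂ζ| ≤ 1 := abs_integral_shift_le ζ hac u hub
    have hint1' : Integrable (fun x => x * (∫ z, u (x + z) ∂ζ)) ρ' := by
      refine Integrable.mono' (integrable_const B) ?_ ?_
      · exact (measurable_id.mul (hφmeas u hum).measurable).aestronglyMeasurable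
      · filter_upwards [haeK] with x hx
        rw [Real.norm_eq_abs, abs_mul]
        calc |x| * |∫ z, u (x + z) ∂ζ| ≤ B * 1 :=
              mul_le_mul (hKb x hx) (hφbd2 x) (abs_nonneg _) hB
          _ = B := mul_one _
    have hψmeas : Measurable (fun x : ℝ => ∫ w, u w * gc (w - x) ∂volume) := by
      have hm : Measurable fun p : ℝ × ℝ => u p.2 * gc (p.2 - p.1) :=
        (hum.comp measurable_snd).mul (gc_cont.measurable.comp (measurable_snd.sub measurable_fst))
      exact hm.stronglyMeasurable.integral_prod_right'.measurable
    have hint2' : Integrable (fun x => x * (∫ w, u w * gc (w - x) ∂volume)) ρ' := by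
      refine Integrable.mono' (integrable_const (B * C1)) ?_ ?_
      · exact (measurable_id.mul hψmeas).aestronglyMeasurable
      · filter_upwards [haeK] with x hx
        rw [Real.norm_eq_abs, abs_mul]
        exact mul_le_mul (hKb x hx) (hψbd x) (abs_nonneg _) hB
    rw [← integral_sub hint1' hint2']
    have hb2 : ∀ᵐ x ∂ρ', ‖x * (∫ z, u (x + z) ∂ζ)
        - x * (∫ w, u w * gc (w - x) ∂volume)‖ ≤ B * δ := by
      filter_upwards [haeK] with x hx
      rw [← mul_sub, Real.norm_eq_abs, abs_mul]
      exact mul_le_mul (hKb x hx) (hψφ x) (abs_nonneg _) hB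
    have h := norm_integral_le_of_norm_le_const hb2
    simpa [Real.norm_eq_abs] using h
  set G : ℕ → ℝ → ℝ := fun m w => ∫ x, x * gc (w - x) ∂(ρ m) with hGdef
  set Glim : ℝ → ℝ := fun w => ∫ x, x * gc (w - x) ∂ρlim with hGlimdef
  have hfactm : ∀ m, _ := fun m => measfact (ρ m) (hρp m) (hρK m)
  have hfactl := measfact ρlim hρlp hρlK
  have hGlim_bd : ∀ w, |Glim w| ≤ B * Mg := hfactl.1
  have hGlim_supp : ∀ w, w ∉ J → Glim w = 0 := hfactl.2.1
  have hGlim_cont : Continuous Glim := hfactl.2.2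
  have Gconv : ∀ w, Tendsto (fun m => G m w) atTop (nhds (Glim w)) := by
    intro w
    refine hnar (fun x => x * gc (w - x))
      (continuous_id.mul (gc_cont.comp (continuous_const.sub continuous_id)))
      ⟨(|w| + R) * Mg, fun x => ?_⟩
    show |x * gc (w - x)| ≤ (|w| + R) * Mg
    by_cases h : gc (w - x) = 0
    · rw [h, mul_zero, abs_zero]
      exact mul_nonneg (add_nonneg (abs_nonneg w) hR0.le) hMg0
    · have h1 : |w - x| < R := by
        by_contra hc
        push_neg at hc
        exact h (hRz _ hc)
      have h3 := abs_sub_abs_le_abs_sub x w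
      have h4 : |x - w| = |w - x| := abs_sub_comm x w
      have h2 : |x| ≤ |w| + R := by linarith
      rw [abs_mul]
      exact mul_le_mul h2 (hMg _) (abs_nonneg _) (add_nonneg (abs_nonneg w) hR0.le)
  have hDbd : ∀ m w, ‖|G m w - Glim w|‖ ≤ 2 * (B * Mg) * J.indicator (fun _ => (1 : ℝ)) w := by
    intro m w
    rw [Real.norm_eq_abs, abs_abs]
    by_cases hwJ : w ∈ J
    · rw [Set.indicator_of_mem hwJ, mul_one]
      have h5 : |G m w - Glim w| ≤ |G m w| + |Glim w| := by
        calc |G m w - Glim w| = |G m w + -Glim w| := by rw [sub_eq_add_neg]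
          _ ≤ |G m w| + |-Glim w| := abs_add_le _ _
          _ = |G m w| + |Glim w| := by rw [abs_neg]
      have h6 := (hfactm m).1 w
      have h7 := hfactl.1 w
      have h8 : |G m w| ≤ B * Mg := h6
      have h9 : |Glim w| ≤ B * Mg := h7
      linarith
    · rw [Set.indicator_of_notMem hwJ, mul_zero]
      have h6 : G m w = 0 := (hfactm m).2.1 w hwJ
      have h7 : Glim w = 0 := hfactl.2.1 w hwJ
      rw [h6, h7, sub_zero, abs_zero]
  have hDint : ∀ m, Integrable (fun w => |G m w - Glim w|) (volume : Measure ℝ) := by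
    intro m
    refine Integrable.mono' (hJind_int.const_mul (2 * (B * Mg)))
      (((hfactm m).2.2.sub hfactl.2.2).abs).aestronglyMeasurable ?_
    exact Eventually.of_forall (hDbd m)
  have GL1 : Tendsto (fun m => ∫ w, |G m w - Glim w| ∂volume) atTop (nhds 0) := by
    have h0 : (∫ w, (0 : ℝ) ∂(volume : Measure ℝ)) = 0 := integral_zero _ _
    rw [← h0]
    refine tendsto_integral_of_dominated_convergence
      (fun w => 2 * (B * Mg) * J.indicator (fun _ => (1 : ℝ)) w)
      (fun m => (((hfactm m).2.2.sub hfactl.2.2).abs).aestronglyMeasurable)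
      (hJind_int.const_mul _) (fun m => Eventually.of_forall (hDbd m)) ?_
    refine Eventually.of_forall fun w => ?_
    have h := ((Gconv w).sub (tendsto_const_nhds (x := Glim w))).abs
    simpa using h
  -- integrability of products against volume
  have hSGint : ∀ u : ℝ → ℝ, Measurable u → (∀ᵐ w ∂(volume : Measure ℝ), |u w| ≤ 1) →
      ∀ h : ℝ → ℝ, Continuous h → (∀ w, |h w| ≤ B * Mg) → (∀ w ∉ J, h w = 0) →
      Integrable (fun w => u w * h w) (volume : Measure ℝ) := by
    intro u hum hub h hc hb hsupp
    refine Integrable.mono' (hJind_int.const_mul (B * Mg))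
      (hum.mul hc.measurable).aestronglyMeasurable ?_
    filter_upwards [hub] with w hw
    by_cases hwJ : w ∈ J
    · rw [Set.indicator_of_mem hwJ, mul_one, Real.norm_eq_abs, abs_mul]
      calc |u w| * |h w| ≤ 1 * (B * Mg) := mul_le_mul hw (hb w) (abs_nonneg _) zero_le_one
        _ = B * Mg := one_mul _
    · rw [hsupp w hwJ]
      simp [Set.indicator_of_notMem hwJ]
  have hbc : ∀ m, |(∫ w, S m w * G m w ∂volume) - ∫ w, S m w * Glim w ∂volume|
      ≤ ∫ w, |G m w - Glim w| ∂volume := by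
    intro m
    have hi1 : Integrable (fun w => S m w * G m w) (volume : Measure ℝ) :=
      hSGint (S m) (hSmeas m) (hSub m) (G m) (hfactm m).2.2 (hfactm m).1 (hfactm m).2.1
    have hi2 : Integrable (fun w => S m w * Glim w) (volume : Measure ℝ) :=
      hSGint (S m) (hSmeas m) (hSub m) Glim hfactl.2.2 hfactl.1 hfactl.2.1
    rw [← integral_sub hi1 hi2]
    have hb : ∀ᵐ w ∂(volume : Measure ℝ),
        ‖S m w * G m w - S m w * Glim w‖ ≤ |G m w - Glim w| := by
      refine Eventually.of_forall fun w => ?_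
      rw [← mul_sub, Real.norm_eq_abs, abs_mul]
      calc |S m w| * |G m w - Glim w| ≤ 1 * |G m w - Glim w| :=
            mul_le_mul_of_nonneg_right (hSbdd m w) (abs_nonneg _)
        _ = |G m w - Glim w| := one_mul _
    have h := norm_integral_le_of_norm_le (hDint m) hb
    simpa [Real.norm_eq_abs] using h
  have hv : Tendsto (fun n => ∫ w, (∑ k ∈ Finset.range (kn n + 1), lam n k * S (n + k) w)
        * Glim w ∂volume) atTop (nhds (∫ w, Slim w * Glim w ∂volume)) := by
    refine tendsto_integral_of_dominated_convergence
      (fun w => (B * Mg) * J.indicator (fun _ => (1 : ℝ)) w) ?_ (hJind_int.const_mul _) ?_ ?_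
    · intro n
      exact ((Finset.measurable_sum _ fun k _ => (hSmeas (n + k)).const_mul _).mul
        hfactl.2.2.measurable).aestronglyMeasurable
    · intro n
      refine Eventually.of_forall fun w => ?_
      show ‖(∑ k ∈ Finset.range (kn n + 1), lam n k * S (n + k) w) * Glim w‖
        ≤ (B * Mg) * J.indicator (fun _ => (1 : ℝ)) w
      by_cases hwJ : w ∈ J
      · rw [Set.indicator_of_mem hwJ, mul_one, Real.norm_eq_abs, abs_mul]
        calc |∑ k ∈ Finset.range (kn n + 1), lam n k * S (n + k) w| * |Glim w|
            ≤ 1 * (B * Mg) := mul_le_mul (comb_abs_le_one S kn lam hSbdd hlam0 hlam1 n w)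
              (hGlim_bd w) (abs_nonneg _) zero_le_one
          _ = B * Mg := one_mul _
      · rw [hGlim_supp w hwJ]
        simp [Set.indicator_of_notMem hwJ]
    · filter_upwards [hae] with w hw
      exact hw.mul_const _
  have hsumpull : ∀ n, ∑ k ∈ Finset.range (kn n + 1),
        lam n k * (∫ w, S (n + k) w * Glim w ∂volume)
      = ∫ w, (∑ k ∈ Finset.range (kn n + 1), lam n k * S (n + k) w) * Glim w ∂volume := by
    intro n
    have hint : ∀ k ∈ Finset.range (kn n + 1),
        Integrable (fun w => lam n k * (S (n + k) w * Glim w)) (volume : Measure ℝ) :=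
      fun k _ => (hSGint (S (n + k)) (hSmeas _) (hSub _) Glim
        hfactl.2.2 hfactl.1 hfactl.2.1).const_mul _
    calc ∑ k ∈ Finset.range (kn n + 1), lam n k * (∫ w, S (n + k) w * Glim w ∂volume)
        = ∑ k ∈ Finset.range (kn n + 1), ∫ w, lam n k * (S (n + k) w * Glim w) ∂volume :=
          Finset.sum_congr rfl fun k _ => (integral_const_mul _ _).symm
      _ = ∫ w, ∑ k ∈ Finset.range (kn n + 1), lam n k * (S (n + k) w * Glim w) ∂volume :=
          (integral_finset_sum _ hint).symm
      _ = ∫ w, (∑ k ∈ Finset.range (kn n + 1), lam n k * S (n + k) w) * Glim w ∂volume := by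
          refine integral_congr_ae (Eventually.of_forall fun w => ?_)
          show (∑ k ∈ Finset.range (kn n + 1), lam n k * (S (n + k) w * Glim w))
            = (∑ k ∈ Finset.range (kn n + 1), lam n k * S (n + k) w) * Glim w
          rw [Finset.sum_mul]
          exact Finset.sum_congr rfl fun k _ => (mul_assoc _ _ _).symm
  -- final assembly
  obtain ⟨N₁, hN₁⟩ := (Metric.tendsto_atTop.mp GL1) (ε / 4) (by positivity)
  obtain ⟨N₂, hN₂⟩ := (Metric.tendsto_atTop.mp hv) (ε / 4) (by positivity)
  refine ⟨max N₁ N₂, fun n hn => ?_⟩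
  rw [Real.dist_eq]
  have hab : ∀ m, |(∫ x, x * (∫ z, S m (x + z) ∂ζ) ∂(ρ m))
      - ∫ w, S m w * G m w ∂volume| ≤ B * δ := fun m =>
    keyest (ρ m) (hρp m) (hρK m) (S m) (hSmeas m) (hSub m)
  have hLv : |(∫ x, x * (∫ z, Slim (x + z) ∂ζ) ∂ρlim)
      - ∫ w, Slim w * Glim w ∂volume| ≤ B * δ :=
    keyest ρlim hρlp hρlK Slim hSlimmeas hSlimub
  have hBδ : B * δ ≤ ε / 4 := by
    have h1 : 0 < B + 1 := by linarith
    have h4 : (B + 1) * δ = ε / 4 := by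
      rw [hδdef]
      field_simp
    calc B * δ ≤ (B + 1) * δ := mul_le_mul_of_nonneg_right (by linarith) hδ.le
      _ = ε / 4 := h4
  have hdecomp : (∑ k ∈ Finset.range (kn n + 1), lam n k *
        ∫ x, x * (∫ z, S (n + k) (x + z) ∂ζ) ∂(ρ (n + k)))
      - ∫ x, x * (∫ z, Slim (x + z) ∂ζ) ∂ρlim
      = (∑ k ∈ Finset.range (kn n + 1), lam n k *
          ((∫ x, x * (∫ z, S (n + k) (x + z) ∂ζ) ∂(ρ (n + k)))
            - ∫ w, S (n + k) w * G (n + k) w ∂volume))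
      + (∑ k ∈ Finset.range (kn n + 1), lam n k *
          ((∫ w, S (n + k) w * G (n + k) w ∂volume)
            - ∫ w, S (n + k) w * Glim w ∂volume))
      + ((∑ k ∈ Finset.range (kn n + 1), lam n k * (∫ w, S (n + k) w * Glim w ∂volume))
          - ∫ w, Slim w * Glim w ∂volume)
      + ((∫ w, Slim w * Glim w ∂volume) - ∫ x, x * (∫ z, Slim (x + z) ∂ζ) ∂ρlim) := by
    have h1 : ∑ k ∈ Finset.range (kn n + 1), lam n k *
          ∫ x, x * (∫ z, S (n + k) (x + z) ∂ζ) ∂(ρ (n + k))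
        = (∑ k ∈ Finset.range (kn n + 1), lam n k *
            ((∫ x, x * (∫ z, S (n + k) (x + z) ∂ζ) ∂(ρ (n + k)))
              - ∫ w, S (n + k) w * G (n + k) w ∂volume))
        + ((∑ k ∈ Finset.range (kn n + 1), lam n k *
            ((∫ w, S (n + k) w * G (n + k) w ∂volume)
              - ∫ w, S (n + k) w * Glim w ∂volume))
        + ∑ k ∈ Finset.range (kn n + 1), lam n k * (∫ w, S (n + k) w * Glim w ∂volume)) := by
      rw [← Finset.sum_add_distrib, ← Finset.sum_add_distrib]
      exact Finset.sum_congr rfl fun k _ => by ring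
    rw [h1]
    ring
  rw [hdecomp]
  refine abs_add4_lt ?_ ?_ ?_ ?_
  · calc |∑ k ∈ Finset.range (kn n + 1), lam n k *
          ((∫ x, x * (∫ z, S (n + k) (x + z) ∂ζ) ∂(ρ (n + k)))
            - ∫ w, S (n + k) w * G (n + k) w ∂volume)|
        ≤ ∑ k ∈ Finset.range (kn n + 1), |lam n k *
          ((∫ x, x * (∫ z, S (n + k) (x + z) ∂ζ) ∂(ρ (n + k)))
            - ∫ w, S (n + k) w * G (n + k) w ∂volume)| := Finset.abs_sum_le_sum_abs _ _
      _ ≤ ∑ k ∈ Finset.range (kn n + 1), lam n k * (B * δ) := by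
          refine Finset.sum_le_sum fun k _ => ?_
          rw [abs_mul, abs_of_nonneg (hlam0 n k)]
          exact mul_le_mul_of_nonneg_left (hab _) (hlam0 n k)
      _ = B * δ := by rw [← Finset.sum_mul, hlam1 n, one_mul]
      _ ≤ ε / 4 := hBδ
  · have hd4 : ∀ m, N₁ ≤ m → (∫ w, |G m w - Glim w| ∂volume) ≤ ε / 4 := by
      intro m hm
      have h := hN₁ m hm
      rw [Real.dist_eq, sub_zero] at h
      exact le_trans (le_abs_self _) h.le
    calc |∑ k ∈ Finset.range (kn n + 1), lam n k *
          ((∫ w, S (n + k) w * G (n + k) w ∂volume)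
            - ∫ w, S (n + k) w * Glim w ∂volume)|
        ≤ ∑ k ∈ Finset.range (kn n + 1), |lam n k *
          ((∫ w, S (n + k) w * G (n + k) w ∂volume)
            - ∫ w, S (n + k) w * Glim w ∂volume)| := Finset.abs_sum_le_sum_abs _ _
      _ ≤ ∑ k ∈ Finset.range (kn n + 1), lam n k * (ε / 4) := by
          refine Finset.sum_le_sum fun k _ => ?_
          rw [abs_mul, abs_of_nonneg (hlam0 n k)]
          refine mul_le_mul_of_nonneg_left ?_ (hlam0 n k)
          exact le_trans (hbc (n + k))
            (hd4 (n + k) (le_trans (le_trans (le_max_left _ _) hn) (Nat.le_add_right n k)))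
      _ = ε / 4 := by rw [← Finset.sum_mul, hlam1 n, one_mul]
  · have h := hN₂ n (le_trans (le_max_right _ _) hn)
    rw [Real.dist_eq] at h
    rw [hsumpull n]
    exact h
  · rw [abs_sub_comm]
    exact le_trans hLv hBδ


set_option maxHeartbeats 1000000 in
/-- Convergence of the price part of the insider's expected utility along
forward convex combinations: if `ξⁿ → ξ` narrowly, `|Sⁿ| ≤ 1`, and the forward
convex combinations `∑ₖ λₙ,ₖ S^{n+k}` converge λ-a.e. to `S`, then the
corresponding convex combinations of the triple integrals converge. -/
theorem convergence_of_utilities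
    (xlo xhi : ℤ) (hx : xlo < xhi)
    (ν : Measure ℝ) [IsProbabilityMeasure ν]
    (hν : ν (Set.Icc (0 : ℝ) 1)ᶜ = 0)
    (ζ : Measure ℝ) [IsProbabilityMeasure ζ]
    (hζsupp : ζ (Set.Icc (-1 : ℝ) 1)ᶜ = 0)
    (hac : ζ ≪ (volume : Measure ℝ))
    (κ : ℕ → Kernel ℝ ℝ) (κlim : Kernel ℝ ℝ)
    [∀ n, IsMarkovKernel (κ n)] [IsMarkovKernel κlim]
    (hκsupp : ∀ n v, (κ n v) (Set.Icc (xlo : ℝ) (xhi : ℝ))ᶜ = 0)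
    (hκsupplim : ∀ v, (κlim v) (Set.Icc (xlo : ℝ) (xhi : ℝ))ᶜ = 0)
    (hnarrow : ∀ A : Set ℝ, MeasurableSet A → ∀ f : ℝ → ℝ, Continuous f →
      (∃ M, ∀ x, |f x| ≤ M) →
      Tendsto (fun n => ∫ v in A, ∫ x, f x ∂(κ n v) ∂ν) atTop
        (nhds (∫ v in A, ∫ x, f x ∂(κlim v) ∂ν)))
    (S : ℕ → ℝ → ℝ) (Slim : ℝ → ℝ)
    (hSmeas : ∀ n, Measurable (S n)) (hSlimmeas : Measurable Slim)
    (hSbdd : ∀ n y, |S n y| ≤ 1)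
    (kn : ℕ → ℕ) (lam : ℕ → ℕ → ℝ)
    (hlam0 : ∀ n k, 0 ≤ lam n k)
    (hlam1 : ∀ n, ∑ k ∈ Finset.range (kn n + 1), lam n k = 1)
    (hae : ∀ᵐ y ∂(volume : Measure ℝ),
      Tendsto (fun n => ∑ k ∈ Finset.range (kn n + 1), lam n k * S (n + k) y)
        atTop (nhds (Slim y))) :
    Tendsto (fun n => ∑ k ∈ Finset.range (kn n + 1), lam n k *
        ∫ v, ∫ x, x * (∫ z, S (n + k) (x + z) ∂ζ) ∂(κ (n + k) v) ∂ν)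
      atTop
      (nhds (∫ v, ∫ x, x * (∫ z, Slim (x + z) ∂ζ) ∂(κlim v) ∂ν)) := by
    classical
  set K : Set ℝ := Set.Icc (xlo : ℝ) (xhi : ℝ) with hKdef
  have hKm : MeasurableSet K := measurableSet_Icc
  set B : ℝ := max |(xlo : ℝ)| |(xhi : ℝ)| with hBdef
  have hB : 0 ≤ B := le_trans (abs_nonneg _) (le_max_left _ _)
  have hKb : ∀ x ∈ K, |x| ≤ B := by
    intro x hx
    rw [hKdef, Set.mem_Icc] at hx
    rw [abs_le]
    constructor
    · calc -B ≤ -|(xlo : ℝ)| := neg_le_neg (le_max_left _ _)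
        _ ≤ (xlo : ℝ) := neg_abs_le _
        _ ≤ x := hx.1
    · calc x ≤ (xhi : ℝ) := hx.2
        _ ≤ |(xhi : ℝ)| := le_abs_self _
        _ ≤ B := le_max_right _ _
  set ρ : ℕ → Measure ℝ := fun m => (ν ⊗ₘ κ m).map Prod.snd with hρdef
  set ρlim : Measure ℝ := (ν ⊗ₘ κlim).map Prod.snd with hρlimdef
  have hρp : ∀ m, IsProbabilityMeasure (ρ m) := fun m =>
    Measure.isProbabilityMeasure_map measurable_snd.aemeasurable
  have hρlp : IsProbabilityMeasure ρlim :=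
    Measure.isProbabilityMeasure_map measurable_snd.aemeasurable
  have hprodnull : ∀ κ' : Kernel ℝ ℝ, IsMarkovKernel κ' → (∀ v, κ' v Kᶜ = 0) →
      (ν ⊗ₘ κ') (Prod.snd ⁻¹' Kᶜ) = 0 := by
    intro κ' hmk hsupp
    haveI := hmk
    rw [Measure.compProd_apply (measurable_snd hKm.compl)]
    have hptw : ∀ v : ℝ, (κ' v) (Prod.mk v ⁻¹' (Prod.snd ⁻¹' Kᶜ)) = 0 := fun v => hsupp v
    calc ∫⁻ v, (κ' v) (Prod.mk v ⁻¹' (Prod.snd ⁻¹' Kᶜ)) ∂ν = ∫⁻ _, 0 ∂ν :=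
          lintegral_congr hptw
      _ = 0 := lintegral_zero
  have hρK : ∀ m, ρ m Kᶜ = 0 := by
    intro m
    show ((ν ⊗ₘ κ m).map Prod.snd) Kᶜ = 0
    rw [Measure.map_apply measurable_snd hKm.compl]
    exact hprodnull (κ m) inferInstance (hκsupp m)
  have hρlK : ρlim Kᶜ = 0 := by
    show ((ν ⊗ₘ κlim).map Prod.snd) Kᶜ = 0
    rw [Measure.map_apply measurable_snd hKm.compl]
    exact hprodnull κlim inferInstance hκsupplim
  have haesnd : ∀ κ' : Kernel ℝ ℝ, IsMarkovKernel κ' → (∀ v, κ' v Kᶜ = 0) →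
      ∀ᵐ p : ℝ × ℝ ∂(ν ⊗ₘ κ'), p.2 ∈ K := by
    intro κ' hmk hsupp
    haveI := hmk
    rw [ae_iff]
    have hset : {p : ℝ × ℝ | ¬ p.2 ∈ K} = Prod.snd ⁻¹' Kᶜ := rfl
    rw [hset]
    exact hprodnull κ' hmk hsupp
  have iter_eq : ∀ κ' : Kernel ℝ ℝ, IsMarkovKernel κ' → (∀ v, κ' v Kᶜ = 0) →
      ∀ (C : ℝ) (f : ℝ → ℝ), Measurable f → (∀ x ∈ K, |f x| ≤ C) →
      ∫ v, ∫ x, f x ∂(κ' v) ∂ν = ∫ x, f x ∂((ν ⊗ₘ κ').map Prod.snd) := by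
    intro κ' hmk hsupp C f hfm hfb
    haveI := hmk
    have hint : Integrable (fun p : ℝ × ℝ => f p.2) (ν ⊗ₘ κ') := by
      refine Integrable.mono' (integrable_const C)
        ((hfm.comp measurable_snd).aestronglyMeasurable) ?_
      filter_upwards [haesnd κ' hmk hsupp] with p hp
      rw [Real.norm_eq_abs]
      exact hfb _ hp
    calc ∫ v, ∫ x, f x ∂(κ' v) ∂ν = ∫ p : ℝ × ℝ, f p.2 ∂(ν ⊗ₘ κ') :=
          (Measure.integral_compProd hint).symm
      _ = ∫ x, f x ∂((ν ⊗ₘ κ').map Prod.snd) :=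
          (integral_map measurable_snd.aemeasurable hfm.aestronglyMeasurable).symm
  have hnar : ∀ f : ℝ → ℝ, Continuous f → (∃ M, ∀ x, |f x| ≤ M) →
      Tendsto (fun m => ∫ x, f x ∂(ρ m)) atTop (nhds (∫ x, f x ∂ρlim)) := by
    intro f hfc hfb
    obtain ⟨M, hM⟩ := hfb
    have h := hnarrow Set.univ MeasurableSet.univ f hfc ⟨M, hM⟩
    simp only [setIntegral_univ] at h
    have e1 : (fun m => ∫ x, f x ∂(ρ m)) = fun m => ∫ v, ∫ x, f x ∂(κ m v) ∂ν := by
      funext m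
      exact (iter_eq (κ m) inferInstance (hκsupp m) M f hfc.measurable fun x _ => hM x).symm
    have e2 : (∫ x, f x ∂ρlim) = ∫ v, ∫ x, f x ∂(κlim v) ∂ν :=
      (iter_eq κlim inferInstance hκsupplim M f hfc.measurable fun x _ => hM x).symm
    rw [e1, e2]
    exact h
  have hφm : ∀ u : ℝ → ℝ, Measurable u →
      Measurable (fun x : ℝ => ∫ z, u (x + z) ∂ζ) := fun u hu =>
    ((hu.comp (measurable_fst.add measurable_snd) :
      Measurable fun p : ℝ × ℝ => u (p.1 + p.2)).stronglyMeasurable).integral_prod_right'.measurable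
  have hSlimub : ∀ᵐ w ∂(volume : Measure ℝ), |Slim w| ≤ 1 :=
    slim_abs_le_one S Slim kn lam hSbdd hlam0 hlam1 hae
  have emain : ∀ m, ∫ v, ∫ x, x * (∫ z, S m (x + z) ∂ζ) ∂(κ m v) ∂ν
      = ∫ x, x * (∫ z, S m (x + z) ∂ζ) ∂(ρ m) := by
    intro m
    refine iter_eq (κ m) inferInstance (hκsupp m) B _
      (measurable_id.mul (hφm (S m) (hSmeas m))) ?_
    intro x hx
    rw [abs_mul]
    calc |x| * |∫ z, S m (x + z) ∂ζ| ≤ B * 1 :=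
          mul_le_mul (hKb x hx)
            (abs_integral_shift_le ζ hac (S m) (Eventually.of_forall (hSbdd m)) x)
            (abs_nonneg _) hB
      _ = B := mul_one _
  have emainlim : ∫ v, ∫ x, x * (∫ z, Slim (x + z) ∂ζ) ∂(κlim v) ∂ν
      = ∫ x, x * (∫ z, Slim (x + z) ∂ζ) ∂ρlim := by
    refine iter_eq κlim inferInstance hκsupplim B _
      (measurable_id.mul (hφm Slim hSlimmeas)) ?_
    intro x hx
    rw [abs_mul]
    calc |x| * |∫ z, Slim (x + z) ∂ζ| ≤ B * 1 :=
          mul_le_mul (hKb x hx) (abs_integral_shift_le ζ hac Slim hSlimub x)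
            (abs_nonneg _) hB
      _ = B := mul_one _
  have haux := aux_main B hB K hKm hKb ζ hac ρ ρlim hρp hρlp hρK hρlK hnar S Slim
    hSmeas hSlimmeas hSbdd kn lam hlam0 hlam1 hae
  have e3 : (fun n => ∑ k ∈ Finset.range (kn n + 1), lam n k *
        ∫ v, ∫ x, x * (∫ z, S (n + k) (x + z) ∂ζ) ∂(κ (n + k) v) ∂ν)
      = fun n => ∑ k ∈ Finset.range (kn n + 1), lam n k *
        ∫ x, x * (∫ z, S (n + k) (x + z) ∂ζ) ∂(ρ (n + k)) := by
    funext n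
    exact Finset.sum_congr rfl fun k _ => by rw [emain (n + k)]
  rw [e3, emainlim]
  exact haux
end

section
/- Let (Sⁿ) be a sequence of Borel-measurable functions from a compact interval E_Y ⊆ ℝ to [0,1]. Then there exist forward convex combinations ∑_{k=0}^{kₙ} λₙ,ₖ S^{n+k} (with λₙ,ₖ ≥ 0 summing to 1) and a Borel-measurable S : E_Y → [0,1] such that ∑_{k=0}^{kₙ} λₙ,ₖ S^{n+k} → S Lebesgue-almost everywhere. -/
open MeasureTheory Filter Finset
open scoped ENNReal NNReal

/-- Extract a forward convex combination from convex-hull membership. -/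
lemma exists_forward_combo {E : Type*} [AddCommGroup E] [Module ℝ E]
    (v : ℕ → E) (m : ℕ) {x : E} (hx : x ∈ convexHull ℝ (v '' {j | m ≤ j})) :
    ∃ (K : ℕ) (lam : ℕ → ℝ), (∀ k, 0 ≤ lam k) ∧
      (∑ k ∈ Finset.range (K + 1), lam k = 1) ∧
      (∑ k ∈ Finset.range (K + 1), lam k • v (m + k)) = x := by
  classical
  rw [_root_.convexHull_eq] at hx
  obtain ⟨ι, t, w, z, hw0, hw1, hz, hcm⟩ := hx
  have hz' : ∀ i ∈ t, ∃ j, m ≤ j ∧ v j = z i := by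
    intro i hi
    rcases hz i hi with ⟨j, hj, hjv⟩
    exact ⟨j, hj, hjv⟩
  choose! J hJm hJv using hz'
  refine ⟨t.sup J, fun k => ∑ i ∈ t.filter (fun i => J i - m = k), w i, ?_, ?_, ?_⟩
  · intro k
    exact Finset.sum_nonneg fun i hi => hw0 i (Finset.mem_filter.1 hi).1
  · have hmap : ∀ i ∈ t, J i - m ∈ Finset.range (t.sup J + 1) := by
      intro i hi
      have := Finset.le_sup (f := J) hi
      exact Finset.mem_range.2 (by omega)
    rw [Finset.sum_fiberwise_of_maps_to hmap w, hw1]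
  · have hmap : ∀ i ∈ t, J i - m ∈ Finset.range (t.sup J + 1) := by
      intro i hi
      have := Finset.le_sup (f := J) hi
      exact Finset.mem_range.2 (by omega)
    calc ∑ k ∈ Finset.range (t.sup J + 1),
          (∑ i ∈ t.filter (fun i => J i - m = k), w i) • v (m + k)
        = ∑ k ∈ Finset.range (t.sup J + 1), ∑ i ∈ t.filter (fun i => J i - m = k),
            w i • z i := by
          refine Finset.sum_congr rfl fun k _ => ?_
          rw [Finset.sum_smul]
          refine Finset.sum_congr rfl fun i hi => ?_
          rw [Finset.mem_filter] at hi
          have h1 : m ≤ J i := hJm i hi.1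
          have h2 : m + k = J i := by omega
          rw [h2, hJv i hi.1]
      _ = ∑ i ∈ t, w i • z i := Finset.sum_fiberwise_of_maps_to hmap _
      _ = x := by rw [← Finset.centerMass_eq_of_sum_1 _ _ hw1, hcm]

/-- Coercion of a finite linear combination in `Lp`. -/
lemma coeFn_sum_smul_Lp {α : Type*} [MeasurableSpace α] {μ : Measure α}
    (s : Finset ℕ) (c : ℕ → ℝ) (F : ℕ → Lp ℝ 2 μ) :
    ⇑(∑ i ∈ s, c i • F i) =ᵐ[μ] fun y => ∑ i ∈ s, c i * (F i : α → ℝ) y := by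
  classical
  induction s using Finset.induction_on with
  | empty => simp only [Finset.sum_empty]; exact Lp.coeFn_zero (E := ℝ) (p := 2) (μ := μ)
  | @insert a s ha ih =>
    rw [Finset.sum_insert ha]
    filter_upwards [Lp.coeFn_add (c a • F a) (∑ i ∈ s, c i • F i),
      Lp.coeFn_smul (c a) (F a), ih] with y h1 h2 h3
    simp only [h1, Pi.add_apply, h2, Pi.smul_apply, smul_eq_mul, h3,
      Finset.sum_insert ha]


/-- Komlós-type lemma (Delbaen–Schachermayer): for a uniformly bounded sequence
of measurable `[0,1]`-valued functions on a compact interval there exist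
forward convex combinations converging Lebesgue-almost everywhere to a
measurable `[0,1]`-valued limit. -/
theorem forward_convex_combinations_ae_convergence
    (a b : ℝ) (hab : a < b)
    (S : ℕ → ℝ → ℝ)
    (hmeas : ∀ n, Measurable (S n))
    (hrange : ∀ n y, 0 ≤ S n y ∧ S n y ≤ 1) :
    ∃ (kn : ℕ → ℕ) (lam : ℕ → ℕ → ℝ) (Slim : ℝ → ℝ),
      (∀ n k, 0 ≤ lam n k) ∧
      (∀ n, ∑ k ∈ Finset.range (kn n + 1), lam n k = 1) ∧
      Measurable Slim ∧ (∀ y, 0 ≤ Slim y ∧ Slim y ≤ 1) ∧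
      ∀ᵐ y ∂(volume : Measure ℝ), y ∈ Set.Icc a b →
        Tendsto (fun n => ∑ k ∈ Finset.range (kn n + 1), lam n k * S (n + k) y)
          atTop (nhds (Slim y)) := by
  classical
  set μ : Measure ℝ := volume.restrict (Set.Icc a b) with hμdef
  haveI : IsFiniteMeasure μ := ⟨by
    rw [hμdef, Measure.restrict_apply_univ]; exact measure_Icc_lt_top⟩
  have hmem : ∀ n, MemLp (S n) 2 μ := fun n =>
    MemLp.of_bound (hmeas n).aestronglyMeasurable 1 (Eventually.of_forall fun y => by
      rw [Real.norm_eq_abs, abs_le]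
      exact ⟨by linarith [(hrange n y).1], (hrange n y).2⟩)
  set fn : ℕ → Lp ℝ 2 μ := fun n => (hmem n).toLp (S n) with hfndef
  -- uniform norm bound
  obtain ⟨M, hM⟩ : ∃ M : ℝ, ∀ n, ‖fn n‖ ≤ M := by
    refine ⟨(μ Set.univ ^ ((2 : ℝ≥0∞).toReal)⁻¹ * ENNReal.ofReal 1).toReal, fun n => ?_⟩
    rw [hfndef]
    rw [Lp.norm_toLp]
    refine ENNReal.toReal_mono ?_ (eLpNorm_le_of_ae_bound (Eventually.of_forall fun y => by
      rw [Real.norm_eq_abs, abs_le]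
      exact ⟨by linarith [(hrange n y).1], (hrange n y).2⟩))
    exact ENNReal.mul_ne_top
      (ENNReal.rpow_ne_top_of_nonneg (by norm_num) (measure_ne_top μ _))
      ENNReal.ofReal_ne_top
  -- ultrafilter limits of inner products
  set U : Ultrafilter ℕ := Ultrafilter.of atTop with hUdef
  have hU : (U : Filter ℕ) ≤ atTop := Ultrafilter.of_le _
  have key : ∀ g : Lp ℝ 2 μ, ∃ r : ℝ,
      Tendsto (fun n => (inner ℝ (fn n) g : ℝ)) (U : Filter ℕ) (nhds r) := by
    intro g
    have hb : ∀ n, (inner ℝ (fn n) g : ℝ) ∈ Set.Icc (-(M * ‖g‖)) (M * ‖g‖) := by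
      intro n
      have h1 : |(inner ℝ (fn n) g : ℝ)| ≤ ‖fn n‖ * ‖g‖ := abs_real_inner_le_norm _ _
      have h2 : ‖fn n‖ * ‖g‖ ≤ M * ‖g‖ :=
        mul_le_mul_of_nonneg_right (hM n) (norm_nonneg g)
      rw [Set.mem_Icc, ← abs_le]
      exact h1.trans h2
    obtain ⟨r, -, hr⟩ := isCompact_Icc.ultrafilter_le_nhds
      (U.map fun n => (inner ℝ (fn n) g : ℝ)) (by
        rw [Ultrafilter.coe_map, Filter.le_principal_iff, Filter.mem_map]
        exact Filter.univ_mem' hb)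
    rw [Ultrafilter.coe_map] at hr
    exact ⟨r, hr⟩
  choose r hr using key
  -- the functional is linear and bounded
  have hadd : ∀ g₁ g₂, r (g₁ + g₂) = r g₁ + r g₂ := fun g₁ g₂ =>
    tendsto_nhds_unique (hr (g₁ + g₂))
      (by simpa [inner_add_right] using (hr g₁).add (hr g₂))
  have hsmul : ∀ (c : ℝ) g, r (c • g) = c * r g := fun c g =>
    tendsto_nhds_unique (hr (c • g))
      (by simpa [inner_smul_right] using (hr g).const_mul c)
  have hbound : ∀ g, ‖r g‖ ≤ M * ‖g‖ := by
    intro g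
    rw [Real.norm_eq_abs]
    refine le_of_tendsto (hr g).abs (Eventually.of_forall fun n => ?_)
    exact (abs_real_inner_le_norm _ _).trans
      (mul_le_mul_of_nonneg_right (hM n) (norm_nonneg g))
  set ℓ : Lp ℝ 2 μ →L[ℝ] ℝ :=
    LinearMap.mkContinuous
      { toFun := r, map_add' := hadd, map_smul' := hsmul } M hbound with hℓdef
  set f : Lp ℝ 2 μ := (InnerProductSpace.toDual ℝ (Lp ℝ 2 μ)).symm ℓ with hfdef
  have hfinner : ∀ g, (inner ℝ f g : ℝ) = r g := fun g =>
    InnerProductSpace.toDual_symm_apply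
  -- Mazur: f is in the closure of the convex hull of every tail
  have hclos : ∀ m : ℕ, f ∈ closure (convexHull ℝ (fn '' {j | m ≤ j})) := by
    intro m
    by_contra hf
    obtain ⟨ℓ', u, hu, huf⟩ := geometric_hahn_banach_closed_point
      ((convex_convexHull ℝ _).closure) isClosed_closure hf
    set w : Lp ℝ 2 μ := (InnerProductSpace.toDual ℝ (Lp ℝ 2 μ)).symm ℓ' with hwdef
    have hw : ∀ x, (inner ℝ w x : ℝ) = ℓ' x := fun x =>
      InnerProductSpace.toDual_symm_apply
    have ht : Tendsto (fun n => ℓ' (fn n)) (U : Filter ℕ) (nhds (ℓ' f)) := by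
      have h0 : Tendsto (fun n => (inner ℝ (fn n) w : ℝ)) (U : Filter ℕ) (nhds (r w)) := hr w
      have e1 : (fun n => (inner ℝ (fn n) w : ℝ)) = fun n => ℓ' (fn n) :=
        funext fun n => by rw [real_inner_comm, hw]
      have e2 : r w = ℓ' f := by rw [← hfinner w, real_inner_comm, hw]
      rwa [e1, e2] at h0
    have hmem' : ∀ᶠ n in (U : Filter ℕ), ℓ' (fn n) ≤ u := by
      refine ((eventually_ge_atTop m).filter_mono hU).mono fun n hn => ?_
      exact (hu _ (subset_closure (subset_convexHull ℝ _ ⟨n, hn, rfl⟩))).le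
    exact absurd (le_of_tendsto ht hmem') (not_le.2 huf)
  -- select convex combinations close to f
  have hsel : ∀ m : ℕ, ∃ h ∈ convexHull ℝ (fn '' {j | m ≤ j}),
      dist f h < (1 / 2 : ℝ) ^ m :=
    fun m => Metric.mem_closure_iff.1 (hclos m) _ (by positivity)
  choose h hhull hdist using hsel
  have hcombo := fun m => exists_forward_combo fn m (hhull m)
  choose K lam hlam0 hlam1 hlamsum using hcombo
  -- identify the convex combinations pointwise
  set T : ℕ → ℝ → ℝ :=
    fun m y => ∑ k ∈ Finset.range (K m + 1), lam m k * S (m + k) y with hTdef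
  have hT : ∀ m, (h m : ℝ → ℝ) =ᵐ[μ] T m := by
    intro m
    have h1 := coeFn_sum_smul_Lp (Finset.range (K m + 1)) (lam m) (fun k => fn (m + k))
    rw [hlamsum m] at h1
    refine h1.trans ?_
    have h2 : ∀ᵐ y ∂μ, ∀ k, (fn (m + k) : ℝ → ℝ) y = S (m + k) y :=
      ae_all_iff.2 fun k => (hmem (m + k)).coeFn_toLp
    filter_upwards [h2] with y hy
    exact Finset.sum_congr rfl fun k _ => by rw [hy k]
  -- T m takes values in [0,1]
  have hT01 : ∀ m y, 0 ≤ T m y ∧ T m y ≤ 1 := by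
    intro m y
    constructor
    · exact Finset.sum_nonneg fun k _ =>
        mul_nonneg (hlam0 m k) (hrange (m + k) y).1
    · calc T m y ≤ ∑ k ∈ Finset.range (K m + 1), lam m k := by
            refine Finset.sum_le_sum fun k _ => ?_
            have := (hrange (m + k) y).2
            nlinarith [hlam0 m k, (hrange (m + k) y).1]
        _ = 1 := hlam1 m
  -- L¹ bounds
  set C : ℝ≥0∞ := μ Set.univ ^ (2⁻¹ : ℝ) with hCdef
  have hCne : C ≠ ⊤ :=
    ENNReal.rpow_ne_top_of_nonneg (by norm_num) (measure_ne_top μ _)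
  have hL1 : ∀ m, ∫⁻ y, ‖((h m - f : Lp ℝ 2 μ) : ℝ → ℝ) y‖₊ ∂μ
      ≤ ENNReal.ofReal ((1 / 2 : ℝ) ^ m) * C := by
    intro m
    have h2 : eLpNorm ((h m - f : Lp ℝ 2 μ) : ℝ → ℝ) 2 μ
        ≤ ENNReal.ofReal ((1 / 2 : ℝ) ^ m) := by
      have := Lp.norm_def (h m - f)
      have hne := Lp.eLpNorm_ne_top (h m - f)
      rw [← ENNReal.ofReal_toReal hne, ← this]
      refine ENNReal.ofReal_le_ofReal ?_
      have : ‖h m - f‖ = dist f (h m) := by rw [dist_eq_norm, norm_sub_rev]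
      rw [this]
      exact (hdist m).le
    have h3 : eLpNorm ((h m - f : Lp ℝ 2 μ) : ℝ → ℝ) 1 μ
        ≤ eLpNorm ((h m - f : Lp ℝ 2 μ) : ℝ → ℝ) 2 μ * C := by
      have := eLpNorm_le_eLpNorm_mul_rpow_measure_univ (p := 1) (q := 2)
        (by norm_num) (Lp.aestronglyMeasurable (h m - f))
      convert this using 2
      rw [hCdef]
      norm_num
    simp only [← enorm_eq_nnnorm]
    rw [← eLpNorm_one_eq_lintegral_enorm]
    exact h3.trans (mul_le_mul_left h2 C)
  -- summability of the L¹ distances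
  have hgeo : (∑' m : ℕ, ENNReal.ofReal ((1 / 2 : ℝ) ^ m)) ≠ ⊤ := by
    have e : ∀ m : ℕ, ENNReal.ofReal ((1 / 2 : ℝ) ^ m) = (2⁻¹ : ℝ≥0∞) ^ m := by
      intro m
      rw [one_div, inv_pow, ENNReal.ofReal_inv_of_pos (by positivity),
        ENNReal.ofReal_pow (by norm_num), ENNReal.ofReal_ofNat, ENNReal.inv_pow]
    rw [tsum_congr e, ENNReal.tsum_geometric, ENNReal.one_sub_inv_two]
    simp
  have htsum : (∑' m : ℕ, ∫⁻ y, ‖((h m - f : Lp ℝ 2 μ) : ℝ → ℝ) y‖₊ ∂μ) ≠ ⊤ := by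
    refine ne_top_of_le_ne_top ?_ (ENNReal.tsum_le_tsum hL1)
    rw [ENNReal.tsum_mul_right]
    exact ENNReal.mul_ne_top hgeo hCne
  have haemeas : ∀ m : ℕ,
      AEMeasurable (fun y => (‖((h m - f : Lp ℝ 2 μ) : ℝ → ℝ) y‖₊ : ℝ≥0∞)) μ :=
    fun m => (Lp.aestronglyMeasurable (h m - f)).enorm
  have hlint : ∫⁻ y, (∑' m : ℕ, (‖((h m - f : Lp ℝ 2 μ) : ℝ → ℝ) y‖₊ : ℝ≥0∞)) ∂μ ≠ ⊤ := by
    rw [lintegral_tsum haemeas]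
    exact htsum
  have hae : ∀ᵐ y ∂μ,
      (∑' m : ℕ, (‖((h m - f : Lp ℝ 2 μ) : ℝ → ℝ) y‖₊ : ℝ≥0∞)) ≠ ⊤ :=
    ae_lt_top' (AEMeasurable.ennreal_tsum haemeas) hlint |>.mono fun y hy => hy.ne
  -- the measurable limit function
  have hfc : StronglyMeasurable (f : ℝ → ℝ) := Lp.stronglyMeasurable f
  set Slim : ℝ → ℝ := fun y => max 0 (min 1 ((f : ℝ → ℝ) y)) with hSlimdef
  have hSlimmeas : Measurable Slim :=
    measurable_const.max (measurable_const.min hfc.measurable)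
  have hSlim01 : ∀ y, 0 ≤ Slim y ∧ Slim y ≤ 1 :=
    fun y => ⟨le_max_left _ _, max_le zero_le_one (min_le_left _ _)⟩
  -- a.e. convergence
  have hconv : ∀ᵐ y ∂μ, Tendsto (fun m => T m y) atTop (nhds (Slim y)) := by
    have hsub : ∀ᵐ y ∂μ, ∀ m, ((h m - f : Lp ℝ 2 μ) : ℝ → ℝ) y
          = T m y - (f : ℝ → ℝ) y := by
      rw [ae_all_iff]
      intro m
      filter_upwards [Lp.coeFn_sub (h m) f, hT m] with y h1 h2
      rw [h1, Pi.sub_apply, h2]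
    filter_upwards [hae, hsub] with y hy hsuby
    have h0 : Tendsto (fun m => (‖((h m - f : Lp ℝ 2 μ) : ℝ → ℝ) y‖₊ : ℝ≥0∞))
        atTop (nhds 0) := ENNReal.tendsto_atTop_zero_of_tsum_ne_top hy
    have h1 : Tendsto (fun m => ‖T m y - (f : ℝ → ℝ) y‖) atTop (nhds 0) := by
      have h2 := (ENNReal.tendsto_toReal (by simp)).comp h0
      simp only [Function.comp_def, ENNReal.coe_toReal, coe_nnnorm,
        ENNReal.toReal_zero] at h2
      convert h2 using 2 with m
      rw [hsuby m]
    have h2 : Tendsto (fun m => T m y) atTop (nhds ((f : ℝ → ℝ) y)) := by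
      rw [tendsto_iff_norm_sub_tendsto_zero]
      exact h1
    have h01 : 0 ≤ (f : ℝ → ℝ) y ∧ (f : ℝ → ℝ) y ≤ 1 :=
      ⟨le_of_tendsto_of_tendsto' tendsto_const_nhds h2 fun m => (hT01 m y).1,
       le_of_tendsto_of_tendsto' h2 tendsto_const_nhds fun m => (hT01 m y).2⟩
    have : Slim y = (f : ℝ → ℝ) y := by
      rw [hSlimdef]
      simp only [min_eq_right h01.2, max_eq_right h01.1]
    rw [this]
    exact h2
  refine ⟨K, lam, Slim, hlam0, hlam1, hSlimmeas, hSlim01, ?_⟩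
  rw [← ae_restrict_iff' measurableSet_Icc]
  exact hconv
end
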